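/- arXiv:1711.10661 — 6 statements merged into one kernel-verified Lean document; each statement's English description precedes it below -/
import Mathlib

section
/- For every integer n ≥ 1 and every real number p with 0 ≤ p < 1, the expectation of 1/√(n−s) for s drawn from the binomial distribution B(n−1,p) is at most 1/√((1−p)n); that is, Σ_{s=0}^{n−1} C(n−1,s) p^s (1−p)^{n−1−s} · (1/√(n−s)) ≤ 1/√((1−p)·n). -/
open Finset

/-- For every integer `n ≥ 1` and real `0 ≤ p < 1`, the expectation of
`1/√(n−s)` for `s ∼ B(n−1,p)` is at most `1/√((1−p)n)`. -/
theorem stmt_0 (n : ℕ) (hn : 1 ≤ n) (p : ℝ) (hp0 : 0 ≤ p) (hp1 : p < 1) :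
    ∑ s ∈ Finset.range n,
        ((n - 1).choose s : ℝ) * p ^ s * (1 - p) ^ (n - 1 - s) *
          (1 / Real.sqrt ((n : ℝ) - (s : ℝ))) ≤
      1 / Real.sqrt ((1 - p) * n) := by
  have hq0 : (0:ℝ) < 1 - p := by linarith
  have hn0 : (0:ℝ) < n := by exact_mod_cast hn
  set w : ℕ → ℝ := fun s => ((n - 1).choose s : ℝ) * p ^ s * (1 - p) ^ (n - 1 - s) with hw
  have hwnn : ∀ s, 0 ≤ w s := fun s => by
    have h1 : (0:ℝ) ≤ 1 - p := le_of_lt hq0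
    simp only [hw]
    positivity
  -- the weights sum to 1
  have hsum1 : ∑ s ∈ range n, w s = 1 := by
    have h := add_pow p (1 - p) (n - 1)
    rw [show p + (1 - p) = 1 by ring, one_pow] at h
    rw [show n = (n - 1) + 1 from (Nat.sub_add_cancel hn).symm, h]
    exact Finset.sum_congr rfl fun s hs => by simp only [hw]; ring
  -- positivity of n - s on range n
  have hpos : ∀ s ∈ range n, (0:ℝ) < (n:ℝ) - s := by
    intro s hs
    have h1 : s < n := Finset.mem_range.mp hs
    have h2 : (s:ℝ) < n := by exact_mod_cast h1
    linarith
  -- second moment sum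
  set T : ℝ := ∑ s ∈ range n, w s * (1 / ((n:ℝ) - s)) with hT
  -- key identity for T
  have hTeq : T = (∑ s ∈ range n, (n.choose s : ℝ) * p ^ s * (1 - p) ^ (n - s)) / ((1 - p) * n) := by
    rw [hT, Finset.sum_div]
    refine Finset.sum_congr rfl fun s hs => ?_
    have hsn : s < n := Finset.mem_range.mp hs
    have hns : (0:ℝ) < (n:ℝ) - s := hpos s hs
    have hkey : ((n - 1).choose s : ℝ) * n = (n.choose s : ℝ) * ((n:ℝ) - s) := by
      have h := Nat.choose_mul_succ_eq (n - 1) s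
      rw [Nat.sub_add_cancel hn] at h
      have h2 := congrArg (Nat.cast : ℕ → ℝ) h
      push_cast [Nat.cast_sub hsn.le] at h2
      linarith [h2]
    have hpow : (1 - p) ^ (n - 1 - s) * (1 - p) = (1 - p) ^ (n - s) := by
      rw [← pow_succ]
      congr 1
      omega
    rw [mul_one_div, div_eq_div_iff hns.ne' (by positivity : ((1 - p) * (n:ℝ)) ≠ 0)]
    calc w s * ((1 - p) * n)
        = ((n - 1).choose s : ℝ) * n * (p ^ s * ((1 - p) ^ (n - 1 - s) * (1 - p))) := by
          simp only [hw]; ring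
      _ = (n.choose s : ℝ) * ((n:ℝ) - s) * (p ^ s * (1 - p) ^ (n - s)) := by
          rw [hkey, hpow]
      _ = (n.choose s : ℝ) * p ^ s * (1 - p) ^ (n - s) * ((n:ℝ) - s) := by ring
  -- binomial theorem bound for the numerator
  have hbin : ∑ s ∈ range (n + 1), (n.choose s : ℝ) * p ^ s * (1 - p) ^ (n - s) = 1 := by
    have h := add_pow p (1 - p) n
    rw [show p + (1 - p) = 1 by ring, one_pow] at h
    calc ∑ s ∈ range (n + 1), (n.choose s : ℝ) * p ^ s * (1 - p) ^ (n - s)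
        = ∑ s ∈ range (n + 1), p ^ s * (1 - p) ^ (n - s) * (n.choose s : ℝ) :=
          Finset.sum_congr rfl fun s hs => by ring
      _ = 1 := h.symm
  have hnum : ∑ s ∈ range n, (n.choose s : ℝ) * p ^ s * (1 - p) ^ (n - s) ≤ 1 := by
    rw [Finset.sum_range_succ] at hbin
    have hlast : (0:ℝ) ≤ (n.choose n : ℝ) * p ^ n * (1 - p) ^ (n - n) := by positivity
    linarith
  have hTle : T ≤ 1 / ((1 - p) * n) := by
    rw [hTeq]
    exact div_le_div₀ (by norm_num) hnum (mul_pos hq0 hn0) le_rfl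
  -- Cauchy–Schwarz
  have hcs := sum_sq_le_sum_mul_sum_of_sq_eq_mul (range n)
    (r := fun s => w s * (1 / Real.sqrt ((n:ℝ) - s)))
    (f := w) (g := fun s => w s * (1 / ((n:ℝ) - s)))
    (fun s _ => hwnn s)
    (fun s hs => mul_nonneg (hwnn s) (one_div_nonneg.mpr (hpos s hs).le))
    (fun s hs => by
      have hns : (0:ℝ) < (n:ℝ) - s := hpos s hs
      rw [mul_pow, div_pow, one_pow, Real.sq_sqrt hns.le]
      ring)
  rw [hsum1, one_mul, ← hT] at hcs
  set S : ℝ := ∑ s ∈ range n, w s * (1 / Real.sqrt ((n:ℝ) - s)) with hS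
  have hS0 : (0:ℝ) ≤ S :=
    Finset.sum_nonneg fun s _ => mul_nonneg (hwnn s) (by positivity)
  have hfin : S ≤ Real.sqrt (1 / ((1 - p) * n)) := by
    rw [← Real.sqrt_sq hS0]
    exact Real.sqrt_le_sqrt (le_trans hcs hTle)
  calc S ≤ Real.sqrt (1 / ((1 - p) * n)) := hfin
    _ = 1 / Real.sqrt ((1 - p) * n) := by
        rw [one_div, Real.sqrt_inv, one_div]
end

section
/- For every integer n ≥ 1 and every real number q with 0 < q ≤ 1, the expectation of 1/√(s+1) for s drawn from the binomial distribution B(n−1,q) is at most 1/√(qn); that is, Σ_{s=0}^{n−1} C(n−1,s) q^s (1−q)^{n−1−s} · (1/√(s+1)) ≤ 1/√(q·n). -/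
open Finset

/-- For every integer `n ≥ 1` and real `0 < q ≤ 1`, the expectation of
`1/√(s+1)` for `s ∼ B(n−1,q)` is at most `1/√(qn)`. -/
theorem stmt_1 (n : ℕ) (hn : 1 ≤ n) (q : ℝ) (hq0 : 0 < q) (hq1 : q ≤ 1) :
    ∑ s ∈ Finset.range n,
        ((n - 1).choose s : ℝ) * q ^ s * (1 - q) ^ (n - 1 - s) *
          (1 / Real.sqrt ((s : ℝ) + 1)) ≤
      1 / Real.sqrt (q * n) := by
  obtain ⟨m, rfl⟩ : ∃ m, n = m + 1 := ⟨n - 1, (Nat.succ_pred_eq_of_pos hn).symm⟩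
  simp only [Nat.add_sub_cancel]
  set p : ℕ → ℝ := fun s => (m.choose s : ℝ) * q ^ s * (1 - q) ^ (m - s) with hp
  have hq1' : 0 ≤ 1 - q := by linarith
  have hp0 : ∀ s, 0 ≤ p s := fun s => by
    simp only [hp]; positivity
  -- sum of the pmf equals 1
  have hsum1 : ∑ s ∈ range (m + 1), p s = 1 := by
    have h := add_pow q (1 - q) m
    simp only [add_sub_cancel, one_pow] at h
    calc ∑ s ∈ range (m + 1), p s
        = ∑ s ∈ range (m + 1), q ^ s * (1 - q) ^ (m - s) * (m.choose s : ℝ) := by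
          refine Finset.sum_congr rfl fun s _ => ?_
          simp only [hp]; ring
      _ = 1 := h.symm
  -- the key bound on E[1/(S+1)]
  have hA : ∑ s ∈ range (m + 1), p s * (1 / ((s : ℝ) + 1)) ≤ 1 / (q * (m + 1)) := by
    have hpos : (0:ℝ) < q * (m + 1) := by positivity
    rw [le_div_iff₀ hpos]
    have hterm : ∀ s ∈ range (m + 1),
        p s * (1 / ((s : ℝ) + 1)) * (q * (m + 1)) =
          ((m + 1).choose (s + 1) : ℝ) * q ^ (s + 1) * (1 - q) ^ (m + 1 - (s + 1)) := by
      intro s hs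
      have hc : ((m + 1 : ℕ) : ℝ) * (m.choose s : ℝ) =
          ((m + 1).choose (s + 1) : ℝ) * ((s : ℝ) + 1) := by
        have := Nat.add_one_mul_choose_eq m s
        exact_mod_cast congrArg (Nat.cast : ℕ → ℝ) this
      have hs1 : ((s : ℝ) + 1) ≠ 0 := by positivity
      have hsub : m + 1 - (s + 1) = m - s := by omega
      rw [hsub]
      simp only [hp]
      field_simp
      push_cast at hc
      linear_combination (q ^ (s + 1) * (1 - q) ^ (m - s)) * hc
    rw [Finset.sum_mul, Finset.sum_congr rfl hterm]
    -- compare with the full binomial sum for exponent m+1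
    have h := add_pow q (1 - q) (m + 1)
    simp only [add_sub_cancel, one_pow] at h
    have hfull : ∑ j ∈ range (m + 2),
        ((m + 1).choose j : ℝ) * q ^ j * (1 - q) ^ (m + 1 - j) = 1 := by
      calc ∑ j ∈ range (m + 2), ((m + 1).choose j : ℝ) * q ^ j * (1 - q) ^ (m + 1 - j)
          = ∑ j ∈ range (m + 1 + 1), q ^ j * (1 - q) ^ (m + 1 - j) * ((m + 1).choose j : ℝ) := by
            exact Finset.sum_congr rfl fun j _ => by ring
        _ = 1 := h.symm
    have hsplit := Finset.sum_range_succ' (fun j =>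
        ((m + 1).choose j : ℝ) * q ^ j * (1 - q) ^ (m + 1 - j)) (m + 1)
    rw [hsplit] at hfull
    have h0 : (0:ℝ) ≤ ((m + 1).choose 0 : ℝ) * q ^ 0 * (1 - q) ^ (m + 1 - 0) := by
      positivity
    linarith
  -- Cauchy–Schwarz
  have hcs := Finset.sum_sq_le_sum_mul_sum_of_sq_eq_mul (range (m + 1))
      (r := fun s => p s * (1 / Real.sqrt ((s : ℝ) + 1)))
      (f := fun s => p s) (g := fun s => p s * (1 / ((s : ℝ) + 1)))
      (fun s _ => hp0 s)
      (fun s _ => by have := hp0 s; positivity)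
      (fun s _ => by
        have hs1 : (0:ℝ) < (s : ℝ) + 1 := by positivity
        rw [mul_pow, div_pow, one_pow, Real.sq_sqrt hs1.le]
        ring)
  rw [hsum1, one_mul] at hcs
  have hLHS0 : 0 ≤ ∑ s ∈ range (m + 1), p s * (1 / Real.sqrt ((s : ℝ) + 1)) := by
    refine Finset.sum_nonneg fun s _ => ?_
    have := hp0 s
    positivity
  have hpos : (0:ℝ) < q * (m + 1) := by positivity
  have hfin : (∑ s ∈ range (m + 1), p s * (1 / Real.sqrt ((s : ℝ) + 1))) ^ 2 ≤
      1 / (q * (m + 1)) := le_trans hcs hA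
  have h1 : ∑ s ∈ range (m + 1), p s * (1 / Real.sqrt ((s : ℝ) + 1)) ≤
      Real.sqrt (1 / (q * (m + 1))) := by
    rw [← Real.sqrt_sq hLHS0]
    exact Real.sqrt_le_sqrt hfin
  calc ∑ s ∈ range (m + 1), p s * (1 / Real.sqrt ((s : ℝ) + 1))
      ≤ Real.sqrt (1 / (q * (m + 1))) := h1
    _ = 1 / Real.sqrt (q * ((m : ℝ) + 1)) := by
        rw [one_div, Real.sqrt_inv, one_div]
    _ = 1 / Real.sqrt (q * ((m + 1 : ℕ) : ℝ)) := by push_cast; ring_nf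
end

section
/- Let S ⊆ {1,…,k}, let F₁,…,F_m be (possibly partial) Boolean functions, where F_i is defined on a subset of X_{i,1} × ⋯ × X_{i,k}, and let μ₁,…,μ_m and μ̃₁,…,μ̃_m be probability distributions with μ_i, μ̃_i supported on the domain of F_i. Then disc_S(⊕_{i=1}^m F_i, ⊗_{i=1}^m μ_i) ≤ Σ_{A ⊆ {1,…,m}} disc_S(⊕_{i∈A} F_i, ⊗_{i∈A} μ̃_i) · ∏_{i∉A} ‖μ_i − μ̃_i‖₁, where ‖μ − μ̃‖₁ = Σ_x |μ(x) − μ̃(x)| and, for A = ∅, the empty XOR is the constant-0 function on a one-point domain whose S-discrepancy equals 1. -/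
open Finset
open scoped Classical

/-- `χ` is an `S`-cylinder intersection on the combined input space of the instances
indexed by `A`: a product over `j ∈ S` of `{0,1}`-valued functions `φ j`, where `φ j`
does not depend on the `j`-th coordinates `(x_{i,j})_{i∈A}`. -/
def IsCylinderM {m k : ℕ} {X : Fin m → Fin k → Type*} (A : Finset (Fin m))
    (S : Finset (Fin k)) (χ : (∀ i : A, ∀ j, X i j) → ℝ) : Prop :=
  ∃ φ : Fin k → ((∀ i : A, ∀ j, X i j) → ℝ),
    (∀ j ∈ S, ∀ x, φ j x = 0 ∨ φ j x = 1) ∧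
    (∀ j ∈ S, ∀ x y, (∀ i : A, ∀ j', j' ≠ j → x i j' = y i j') → φ j x = φ j y) ∧
    (∀ x, χ x = ∏ j ∈ S, φ j x)

/-- The `S`-discrepancy of the XOR `⊕_{i∈A} F_i` of the (possibly partial) Boolean
functions `F_i` (with domains `D i`), with respect to the product distribution
`⊗_{i∈A} μ_i`. The sum defining the correlation ranges over the domain
`∏_{i∈A} dom F_i`, and `(−1)^{⊕_{i∈A} F_i(x_i)} = ∏_{i∈A} (−1)^{F_i(x_i)}`. -/
noncomputable def discM {m k : ℕ} {X : Fin m → Fin k → Type*} [∀ i j, Fintype (X i j)]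
    (A : Finset (Fin m)) (S : Finset (Fin k))
    (D : ∀ i, Finset (∀ j, X i j)) (F : ∀ i, (∀ j, X i j) → Bool)
    (μ : ∀ i, (∀ j, X i j) → ℝ) : ℝ :=
  sSup {t : ℝ | ∃ χ : (∀ i : A, ∀ j, X i j) → ℝ, IsCylinderM A S χ ∧
    t = |∑ x ∈ Finset.univ.filter (fun x : ∀ i : A, ∀ j, X i j => ∀ i : A, x i ∈ D i.1),
          (∏ i : A, if F i.1 (x i) then (-1 : ℝ) else 1) * (∏ i : A, μ i.1 (x i)) * χ x|}

section helpers
variable {m k : ℕ} {X : Fin m → Fin k → Type*} [∀ i j, Fintype (X i j)]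

lemma isCylinderM_one (A : Finset (Fin m)) (S : Finset (Fin k)) :
    IsCylinderM A S (fun _ : (∀ i : A, ∀ j, X i j) => (1 : ℝ)) :=
  ⟨fun _ _ => 1, fun _ _ _ => Or.inr rfl, fun _ _ _ _ _ => rfl,
    fun _ => (Finset.prod_const_one).symm⟩

lemma cyl_abs_le_one {A : Finset (Fin m)} {S : Finset (Fin k)}
    {χ : (∀ i : A, ∀ j, X i j) → ℝ} (h : IsCylinderM A S χ) (x) : |χ x| ≤ 1 := by
  obtain ⟨φ, h01, -, hx⟩ := h
  rw [hx x, Finset.abs_prod]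
  refine Finset.prod_le_one (fun j _ => abs_nonneg _) (fun j hj => ?_)
  rcases h01 j hj x with h | h <;> simp [h]

lemma discM_bddAbove (A : Finset (Fin m)) (S : Finset (Fin k))
    (D : ∀ i, Finset (∀ j, X i j)) (F : ∀ i, (∀ j, X i j) → Bool)
    (μ : ∀ i, (∀ j, X i j) → ℝ) :
    BddAbove {t : ℝ | ∃ χ : (∀ i : A, ∀ j, X i j) → ℝ, IsCylinderM A S χ ∧
      t = |∑ x ∈ Finset.univ.filter (fun x : ∀ i : A, ∀ j, X i j => ∀ i : A, x i ∈ D i.1),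
            (∏ i : A, if F i.1 (x i) then (-1 : ℝ) else 1) * (∏ i : A, μ i.1 (x i)) * χ x|} := by
  refine ⟨∑ x : ∀ i : A, ∀ j, X i j, ∏ i : A, |μ i.1 (x i)|, ?_⟩
  rintro t ⟨χ, hχ, rfl⟩
  calc |∑ x ∈ Finset.univ.filter (fun x : ∀ i : A, ∀ j, X i j => ∀ i : A, x i ∈ D i.1),
          (∏ i : A, if F i.1 (x i) then (-1 : ℝ) else 1) * (∏ i : A, μ i.1 (x i)) * χ x|
      ≤ ∑ x ∈ Finset.univ.filter (fun x : ∀ i : A, ∀ j, X i j => ∀ i : A, x i ∈ D i.1),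
          |(∏ i : A, if F i.1 (x i) then (-1 : ℝ) else 1) * (∏ i : A, μ i.1 (x i)) * χ x| :=
        Finset.abs_sum_le_sum_abs _ _
    _ ≤ ∑ x ∈ Finset.univ.filter (fun x : ∀ i : A, ∀ j, X i j => ∀ i : A, x i ∈ D i.1),
          ∏ i : A, |μ i.1 (x i)| := by
        refine Finset.sum_le_sum (fun x _ => ?_)
        have hE : |∏ i : A, (if F i.1 (x i) then (-1 : ℝ) else 1)| = 1 := by
          rw [Finset.abs_prod]
          exact Finset.prod_eq_one fun i _ => by split_ifs <;> simp
        rw [abs_mul, abs_mul, hE, one_mul, Finset.abs_prod]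
        calc (∏ i : A, |μ i.1 (x i)|) * |χ x| ≤ (∏ i : A, |μ i.1 (x i)|) * 1 :=
              mul_le_mul_of_nonneg_left (cyl_abs_le_one hχ x)
                (Finset.prod_nonneg fun _ _ => abs_nonneg _)
          _ = _ := mul_one _
    _ ≤ ∑ x : ∀ i : A, ∀ j, X i j, ∏ i : A, |μ i.1 (x i)| :=
        Finset.sum_le_sum_of_subset_of_nonneg (Finset.filter_subset _ _)
          (fun x _ _ => Finset.prod_nonneg fun _ _ => abs_nonneg _)

lemma abs_corr_le_discM (A : Finset (Fin m)) (S : Finset (Fin k))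
    (D : ∀ i, Finset (∀ j, X i j)) (F : ∀ i, (∀ j, X i j) → Bool)
    (μ : ∀ i, (∀ j, X i j) → ℝ) {χ : (∀ i : A, ∀ j, X i j) → ℝ}
    (hχ : IsCylinderM A S χ) :
    |∑ x ∈ Finset.univ.filter (fun x : ∀ i : A, ∀ j, X i j => ∀ i : A, x i ∈ D i.1),
        (∏ i : A, if F i.1 (x i) then (-1 : ℝ) else 1) * (∏ i : A, μ i.1 (x i)) * χ x|
      ≤ discM A S D F μ :=
  le_csSup (discM_bddAbove A S D F μ) ⟨χ, hχ, rfl⟩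

lemma discM_nonneg (A : Finset (Fin m)) (S : Finset (Fin k))
    (D : ∀ i, Finset (∀ j, X i j)) (F : ∀ i, (∀ j, X i j) → Bool)
    (μ : ∀ i, (∀ j, X i j) → ℝ) : 0 ≤ discM A S D F μ :=
  le_trans (abs_nonneg _) (abs_corr_le_discM A S D F μ (isCylinderM_one A S))

end helpers

/-- continuity of discrepancy, general form. -/
theorem stmt_5 {m k : ℕ} {X : Fin m → Fin k → Type*} [∀ i j, Fintype (X i j)]
    [∀ i j, Nonempty (X i j)] (hm : 0 < m) (hk : 0 < k)
    (S : Finset (Fin k))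
    (D : ∀ i, Finset (∀ j, X i j)) (F : ∀ i, (∀ j, X i j) → Bool)
    (μ μt : ∀ i, (∀ j, X i j) → ℝ)
    (hμ0 : ∀ i x, 0 ≤ μ i x) (hμ1 : ∀ i, ∑ x ∈ D i, μ i x = 1)
    (hμs : ∀ i, ∀ x ∉ D i, μ i x = 0)
    (hμt0 : ∀ i x, 0 ≤ μt i x) (hμt1 : ∀ i, ∑ x ∈ D i, μt i x = 1)
    (hμts : ∀ i, ∀ x ∉ D i, μt i x = 0) :
    discM Finset.univ S D F μ ≤
      ∑ A : Finset (Fin m),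
        discM A S D F μt * ∏ i ∈ Aᶜ, (∑ x : ∀ j, X i j, |μ i x - μt i x|) := by
  classical
  simp only [discM]
  refine csSup_le ⟨_, fun _ => (1 : ℝ), isCylinderM_one _ _, rfl⟩ ?_
  rintro t ⟨χ, hχ, rfl⟩
  -- reindexing equivalence between functions on the subtype of `univ` and plain functions
  let e : (∀ i : (Finset.univ : Finset (Fin m)), ∀ j, X i.1 j) ≃ (∀ i, ∀ j, X i j) :=
    { toFun := fun x i => x ⟨i, Finset.mem_univ i⟩
      invFun := fun y i => y i.1
      left_inv := fun x => rfl
      right_inv := fun y => rfl }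
  have step1 :
      (∑ x ∈ Finset.univ.filter
          (fun x : ∀ i : (Finset.univ : Finset (Fin m)), ∀ j, X i.1 j =>
            ∀ i : (Finset.univ : Finset (Fin m)), x i ∈ D i.1),
        (∏ i : (Finset.univ : Finset (Fin m)), if F i.1 (x i) then (-1 : ℝ) else 1) *
          (∏ i : (Finset.univ : Finset (Fin m)), μ i.1 (x i)) * χ x)
      = ∑ y : ∀ i, ∀ j, X i j,
          if (∀ i, y i ∈ D i) then
            (∏ i, if F i (y i) then (-1 : ℝ) else 1) * (∏ i, μ i (y i)) * χ (e.symm y)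
          else 0 := by
    rw [Finset.sum_filter]
    refine (Fintype.sum_equiv e.symm _ _ (fun y => ?_)).symm
    have h1 : (∀ i, y i ∈ D i) ↔
        (∀ i : (Finset.univ : Finset (Fin m)), (e.symm y) i ∈ D i.1) :=
      ⟨fun h i => h i.1, fun h i => h ⟨i, Finset.mem_univ i⟩⟩
    have h2 : (∏ i, if F i (y i) then (-1 : ℝ) else 1)
        = ∏ i : (Finset.univ : Finset (Fin m)), (if F i.1 ((e.symm y) i) then (-1 : ℝ) else 1) :=
      (Finset.prod_coe_sort _ (fun i => if F i (y i) then (-1 : ℝ) else 1)).symm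
    have h3 : (∏ i, μ i (y i)) = ∏ i : (Finset.univ : Finset (Fin m)), μ i.1 ((e.symm y) i) :=
      (Finset.prod_coe_sort _ (fun i => μ i (y i))).symm
    rw [h2, h3]
    exact if_congr h1 rfl rfl
  have hsplit : ∀ y : ∀ i, ∀ j, X i j, (∏ i, μ i (y i))
      = ∑ A : Finset (Fin m), (∏ i ∈ A, μt i (y i)) * ∏ i ∈ Aᶜ, (μ i (y i) - μt i (y i)) := by
    intro y
    calc (∏ i, μ i (y i)) = ∏ i, (μt i (y i) + (μ i (y i) - μt i (y i))) :=
          Finset.prod_congr rfl fun i _ => by ring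
      _ = ∑ A ∈ Finset.univ.powerset,
            (∏ i ∈ A, μt i (y i)) * ∏ i ∈ Finset.univ \ A, (μ i (y i) - μt i (y i)) :=
          Finset.prod_add _ _ _
      _ = _ := by
          rw [Finset.powerset_univ]
          exact Finset.sum_congr rfl fun A _ => by rw [← Finset.compl_eq_univ_sdiff]
  have step2 :
      (∑ y : ∀ i, ∀ j, X i j,
        if (∀ i, y i ∈ D i) then
          (∏ i, if F i (y i) then (-1 : ℝ) else 1) * (∏ i, μ i (y i)) * χ (e.symm y)
        else 0)
      = ∑ A : Finset (Fin m), ∑ y : ∀ i, ∀ j, X i j,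
          if (∀ i, y i ∈ D i) then
            (∏ i, if F i (y i) then (-1 : ℝ) else 1) *
              ((∏ i ∈ A, μt i (y i)) * ∏ i ∈ Aᶜ, (μ i (y i) - μt i (y i))) * χ (e.symm y)
          else 0 := by
    rw [← Finset.sum_comm]
    refine Finset.sum_congr rfl fun y _ => ?_
    by_cases hc : (∀ i, y i ∈ D i)
    · rw [if_pos hc, hsplit y, Finset.mul_sum, Finset.sum_mul]
      exact Finset.sum_congr rfl fun A _ => by rw [if_pos hc]
    · simp [hc]
  have key : ∀ A : Finset (Fin m),
      |∑ y : ∀ i, ∀ j, X i j,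
          if (∀ i, y i ∈ D i) then
            (∏ i, if F i (y i) then (-1 : ℝ) else 1) *
              ((∏ i ∈ A, μt i (y i)) * ∏ i ∈ Aᶜ, (μ i (y i) - μt i (y i))) * χ (e.symm y)
          else 0|
        ≤ discM A S D F μt * ∏ i ∈ Aᶜ, (∑ x : ∀ j, X i j, |μ i x - μt i x|) := by
    intro A
    let q := Equiv.piEquivPiSubtypeProd (fun i => i ∈ A) (fun i => ∀ j, X i j)
    let e3 : {i // i ∈ Aᶜ} ≃ {i // ¬ i ∈ A} :=
      Equiv.subtypeEquivRight (fun i => Finset.mem_compl)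
    have hca : ∀ (a : ∀ i : A, ∀ j, X i.1 j) (b : ∀ i : {i // ¬ i ∈ A}, ∀ j, X i.1 j)
        (i : A), q.symm (a, b) i.1 = a i := fun a b i => dif_pos i.2
    have hcb : ∀ (a : ∀ i : A, ∀ j, X i.1 j) (b : ∀ i : {i // ¬ i ∈ A}, ∀ j, X i.1 j)
        (i : {i // ¬ i ∈ A}), q.symm (a, b) i.1 = b i := fun a b i => dif_neg i.2
    have hcylb : ∀ b : ∀ i : {i // ¬ i ∈ A}, ∀ j, X i.1 j,
        IsCylinderM A S (fun a : ∀ i : A, ∀ j, X i.1 j => χ (e.symm (q.symm (a, b)))) := by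
      intro b
      obtain ⟨φ, hφ01, hφind, hχφ⟩ := hχ
      refine ⟨fun j a => φ j (e.symm (q.symm (a, b))), fun j hj a => hφ01 j hj _, ?_,
        fun a => hχφ _⟩
      intro j hj a a' hagree
      refine hφind j hj _ _ ?_
      intro i j' hj'
      show q.symm (a, b) i.1 j' = q.symm (a', b) i.1 j'
      by_cases hi : i.1 ∈ A
      · rw [show q.symm (a, b) i.1 = a ⟨i.1, hi⟩ from dif_pos hi,
          show q.symm (a', b) i.1 = a' ⟨i.1, hi⟩ from dif_pos hi]
        exact hagree ⟨i.1, hi⟩ j' hj'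
      · rw [show q.symm (a, b) i.1 = b ⟨i.1, hi⟩ from dif_neg hi,
          show q.symm (a', b) i.1 = b ⟨i.1, hi⟩ from dif_neg hi]
    have hpt : ∀ (a : ∀ i : A, ∀ j, X i.1 j) (b : ∀ i : {i // ¬ i ∈ A}, ∀ j, X i.1 j),
        (if (∀ i, q.symm (a, b) i ∈ D i) then
            (∏ i, if F i (q.symm (a, b) i) then (-1 : ℝ) else 1) *
              ((∏ i ∈ A, μt i (q.symm (a, b) i)) *
                ∏ i ∈ Aᶜ, (μ i (q.symm (a, b) i) - μt i (q.symm (a, b) i))) *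
              χ (e.symm (q.symm (a, b)))
          else 0)
        = (if (∀ i : {i // ¬ i ∈ A}, b i ∈ D i.1) then
              (∏ i : {i // ¬ i ∈ A}, if F i.1 (b i) then (-1 : ℝ) else 1) *
                ∏ i : {i // ¬ i ∈ A}, (μ i.1 (b i) - μt i.1 (b i))
            else 0) *
          (if (∀ i : A, a i ∈ D i.1) then
              (∏ i : A, if F i.1 (a i) then (-1 : ℝ) else 1) * (∏ i : A, μt i.1 (a i)) *
                χ (e.symm (q.symm (a, b)))
            else 0) := by
      intro a b
      have hcond : (∀ i, q.symm (a, b) i ∈ D i) ↔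
          ((∀ i : A, a i ∈ D i.1) ∧ (∀ i : {i // ¬ i ∈ A}, b i ∈ D i.1)) := by
        constructor
        · exact fun h => ⟨fun i => hca a b i ▸ h i.1, fun i => hcb a b i ▸ h i.1⟩
        · rintro ⟨h1, h2⟩ i
          by_cases hi : i ∈ A
          · rw [show q.symm (a, b) i = a ⟨i, hi⟩ from dif_pos hi]; exact h1 ⟨i, hi⟩
          · rw [show q.symm (a, b) i = b ⟨i, hi⟩ from dif_neg hi]; exact h2 ⟨i, hi⟩
      have hE : (∏ i, if F i (q.symm (a, b) i) then (-1 : ℝ) else 1)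
          = (∏ i : A, if F i.1 (a i) then (-1 : ℝ) else 1) *
            ∏ i : {i // ¬ i ∈ A}, (if F i.1 (b i) then (-1 : ℝ) else 1) := by
        rw [← Finset.prod_mul_prod_compl A
          (fun i => if F i (q.symm (a, b) i) then (-1 : ℝ) else 1)]
        congr 1
        · calc ∏ i ∈ A, (if F i (q.symm (a, b) i) then (-1 : ℝ) else 1)
              = ∏ i : A, (if F i.1 (q.symm (a, b) i.1) then (-1 : ℝ) else 1) :=
                (Finset.prod_coe_sort _ _).symm
            _ = _ := Finset.prod_congr rfl fun i _ => by rw [hca a b i]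
        · calc ∏ i ∈ Aᶜ, (if F i (q.symm (a, b) i) then (-1 : ℝ) else 1)
              = ∏ i : {i // i ∈ Aᶜ}, (if F i.1 (q.symm (a, b) i.1) then (-1 : ℝ) else 1) :=
                (Finset.prod_coe_sort _ _).symm
            _ = _ := Fintype.prod_equiv e3 _ _ fun i => by
                rw [show q.symm (a, b) i.1 = b (e3 i) from dif_neg (Finset.mem_compl.mp i.2)]
                exact rfl
      have hMt : (∏ i ∈ A, μt i (q.symm (a, b) i)) = ∏ i : A, μt i.1 (a i) := by
        calc ∏ i ∈ A, μt i (q.symm (a, b) i)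
            = ∏ i : A, μt i.1 (q.symm (a, b) i.1) := (Finset.prod_coe_sort _ _).symm
          _ = _ := Finset.prod_congr rfl fun i _ => by rw [hca a b i]
      have hDl : (∏ i ∈ Aᶜ, (μ i (q.symm (a, b) i) - μt i (q.symm (a, b) i)))
          = ∏ i : {i // ¬ i ∈ A}, (μ i.1 (b i) - μt i.1 (b i)) := by
        calc ∏ i ∈ Aᶜ, (μ i (q.symm (a, b) i) - μt i (q.symm (a, b) i))
            = ∏ i : {i // i ∈ Aᶜ}, (μ i.1 (q.symm (a, b) i.1) - μt i.1 (q.symm (a, b) i.1)) :=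
              (Finset.prod_coe_sort _ _).symm
          _ = _ := Fintype.prod_equiv e3 _ _ fun i => by
              rw [show q.symm (a, b) i.1 = b (e3 i) from dif_neg (Finset.mem_compl.mp i.2)]
              exact rfl
      by_cases h1 : (∀ i : A, a i ∈ D i.1) <;>
        by_cases h2 : (∀ i : {i // ¬ i ∈ A}, b i ∈ D i.1)
      · rw [if_pos (hcond.mpr ⟨h1, h2⟩), if_pos h1, if_pos h2, hE, hMt, hDl]; ring
      · rw [if_neg (fun hc => h2 (hcond.mp hc).2), if_neg h2]; ring
      · rw [if_neg (fun hc => h1 (hcond.mp hc).1), if_neg h1]; ring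
      · rw [if_neg (fun hc => h1 (hcond.mp hc).1), if_neg h1]; ring
    have hIA : ∀ b : ∀ i : {i // ¬ i ∈ A}, ∀ j, X i.1 j,
        |∑ a : ∀ i : A, ∀ j, X i.1 j,
            if (∀ i : A, a i ∈ D i.1) then
              (∏ i : A, if F i.1 (a i) then (-1 : ℝ) else 1) * (∏ i : A, μt i.1 (a i)) *
                χ (e.symm (q.symm (a, b)))
            else 0|
          ≤ discM A S D F μt := by
      intro b
      have h := abs_corr_le_discM A S D F μt (hcylb b)
      refine le_trans (le_of_eq ?_) h
      exact congrArg abs (Finset.sum_filter _ _).symm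
    have hwb : ∀ b : ∀ i : {i // ¬ i ∈ A}, ∀ j, X i.1 j,
        |if (∀ i : {i // ¬ i ∈ A}, b i ∈ D i.1) then
            (∏ i : {i // ¬ i ∈ A}, if F i.1 (b i) then (-1 : ℝ) else 1) *
              ∏ i : {i // ¬ i ∈ A}, (μ i.1 (b i) - μt i.1 (b i))
          else 0|
          ≤ ∏ i : {i // ¬ i ∈ A}, |μ i.1 (b i) - μt i.1 (b i)| := by
      intro b
      by_cases h2 : (∀ i : {i // ¬ i ∈ A}, b i ∈ D i.1)
      · rw [if_pos h2, abs_mul, Finset.abs_prod, Finset.abs_prod]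
        have h3 : (∏ i : {i // ¬ i ∈ A}, |if F i.1 (b i) then (-1 : ℝ) else 1|) = 1 :=
          Finset.prod_eq_one fun i _ => by split_ifs <;> simp
        rw [h3, one_mul]
      · rw [if_neg h2, abs_zero]
        exact Finset.prod_nonneg fun i _ => abs_nonneg _
    have hprod : (∏ i ∈ Aᶜ, (∑ x : ∀ j, X i j, |μ i x - μt i x|))
        = ∑ b : ∀ i : {i // ¬ i ∈ A}, ∀ j, X i.1 j,
            ∏ i : {i // ¬ i ∈ A}, |μ i.1 (b i) - μt i.1 (b i)| := by
      calc ∏ i ∈ Aᶜ, (∑ x : ∀ j, X i j, |μ i x - μt i x|)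
          = ∏ i : {i // i ∈ Aᶜ}, ∑ x : ∀ j, X i.1 j, |μ i.1 x - μt i.1 x| :=
            (Finset.prod_coe_sort _ _).symm
        _ = ∏ i : {i // ¬ i ∈ A}, ∑ x : ∀ j, X i.1 j, |μ i.1 x - μt i.1 x| :=
            Fintype.prod_equiv e3 _ _ fun i => rfl
        _ = _ := by
            rw [Finset.prod_univ_sum (fun _ => Finset.univ)
              (fun (i : {i // ¬ i ∈ A}) x => |μ i.1 x - μt i.1 x|), Fintype.piFinset_univ]
    have hre : (∑ y : ∀ i, ∀ j, X i j,
          if (∀ i, y i ∈ D i) then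
            (∏ i, if F i (y i) then (-1 : ℝ) else 1) *
              ((∏ i ∈ A, μt i (y i)) * ∏ i ∈ Aᶜ, (μ i (y i) - μt i (y i))) * χ (e.symm y)
          else 0)
        = ∑ a : ∀ i : A, ∀ j, X i.1 j, ∑ b : ∀ i : {i // ¬ i ∈ A}, ∀ j, X i.1 j,
            (if (∀ i : {i // ¬ i ∈ A}, b i ∈ D i.1) then
                (∏ i : {i // ¬ i ∈ A}, if F i.1 (b i) then (-1 : ℝ) else 1) *
                  ∏ i : {i // ¬ i ∈ A}, (μ i.1 (b i) - μt i.1 (b i))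
              else 0) *
            (if (∀ i : A, a i ∈ D i.1) then
                (∏ i : A, if F i.1 (a i) then (-1 : ℝ) else 1) * (∏ i : A, μt i.1 (a i)) *
                  χ (e.symm (q.symm (a, b)))
              else 0) := by
      rw [← Equiv.sum_comp q.symm (fun y : ∀ i, ∀ j, X i j =>
          if (∀ i, y i ∈ D i) then
            (∏ i, if F i (y i) then (-1 : ℝ) else 1) *
              ((∏ i ∈ A, μt i (y i)) * ∏ i ∈ Aᶜ, (μ i (y i) - μt i (y i))) * χ (e.symm y)
          else 0), Fintype.sum_prod_type]
      exact Finset.sum_congr rfl fun a _ => Finset.sum_congr rfl fun b _ => hpt a b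
    rw [hre, Finset.sum_comm]
    calc |∑ b : ∀ i : {i // ¬ i ∈ A}, ∀ j, X i.1 j, ∑ a : ∀ i : A, ∀ j, X i.1 j,
            (if (∀ i : {i // ¬ i ∈ A}, b i ∈ D i.1) then
                (∏ i : {i // ¬ i ∈ A}, if F i.1 (b i) then (-1 : ℝ) else 1) *
                  ∏ i : {i // ¬ i ∈ A}, (μ i.1 (b i) - μt i.1 (b i))
              else 0) *
            (if (∀ i : A, a i ∈ D i.1) then
                (∏ i : A, if F i.1 (a i) then (-1 : ℝ) else 1) * (∏ i : A, μt i.1 (a i)) *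
                  χ (e.symm (q.symm (a, b)))
              else 0)|
        = |∑ b : ∀ i : {i // ¬ i ∈ A}, ∀ j, X i.1 j,
            (if (∀ i : {i // ¬ i ∈ A}, b i ∈ D i.1) then
                (∏ i : {i // ¬ i ∈ A}, if F i.1 (b i) then (-1 : ℝ) else 1) *
                  ∏ i : {i // ¬ i ∈ A}, (μ i.1 (b i) - μt i.1 (b i))
              else 0) *
            ∑ a : ∀ i : A, ∀ j, X i.1 j,
              (if (∀ i : A, a i ∈ D i.1) then
                (∏ i : A, if F i.1 (a i) then (-1 : ℝ) else 1) * (∏ i : A, μt i.1 (a i)) *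
                  χ (e.symm (q.symm (a, b)))
              else 0)| := by
          exact congrArg abs (Finset.sum_congr rfl fun b _ => (Finset.mul_sum _ _ _).symm)
      _ ≤ ∑ b : ∀ i : {i // ¬ i ∈ A}, ∀ j, X i.1 j,
            |(if (∀ i : {i // ¬ i ∈ A}, b i ∈ D i.1) then
                (∏ i : {i // ¬ i ∈ A}, if F i.1 (b i) then (-1 : ℝ) else 1) *
                  ∏ i : {i // ¬ i ∈ A}, (μ i.1 (b i) - μt i.1 (b i))
              else 0)| *
            |∑ a : ∀ i : A, ∀ j, X i.1 j,
              (if (∀ i : A, a i ∈ D i.1) then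
                (∏ i : A, if F i.1 (a i) then (-1 : ℝ) else 1) * (∏ i : A, μt i.1 (a i)) *
                  χ (e.symm (q.symm (a, b)))
              else 0)| := by
          refine le_trans (Finset.abs_sum_le_sum_abs _ _) (le_of_eq ?_)
          exact Finset.sum_congr rfl fun b _ => abs_mul _ _
      _ ≤ ∑ b : ∀ i : {i // ¬ i ∈ A}, ∀ j, X i.1 j,
            (∏ i : {i // ¬ i ∈ A}, |μ i.1 (b i) - μt i.1 (b i)|) * discM A S D F μt := by
          refine Finset.sum_le_sum fun b _ => ?_
          exact mul_le_mul (hwb b) (hIA b) (abs_nonneg _)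
            (Finset.prod_nonneg fun i _ => abs_nonneg _)
      _ = (∑ b : ∀ i : {i // ¬ i ∈ A}, ∀ j, X i.1 j,
            ∏ i : {i // ¬ i ∈ A}, |μ i.1 (b i) - μt i.1 (b i)|) * discM A S D F μt :=
          (Finset.sum_mul _ _ _).symm
      _ = (∏ i ∈ Aᶜ, (∑ x : ∀ j, X i j, |μ i x - μt i x|)) * discM A S D F μt := by
          rw [hprod]
      _ = _ := mul_comm _ _

  rw [step1, step2]
  calc |∑ A : Finset (Fin m), ∑ y : ∀ i, ∀ j, X i j,
          if (∀ i, y i ∈ D i) then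
            (∏ i, if F i (y i) then (-1 : ℝ) else 1) *
              ((∏ i ∈ A, μt i (y i)) * ∏ i ∈ Aᶜ, (μ i (y i) - μt i (y i))) * χ (e.symm y)
          else 0|
      ≤ ∑ A : Finset (Fin m), |∑ y : ∀ i, ∀ j, X i j,
          if (∀ i, y i ∈ D i) then
            (∏ i, if F i (y i) then (-1 : ℝ) else 1) *
              ((∏ i ∈ A, μt i (y i)) * ∏ i ∈ Aᶜ, (μ i (y i) - μt i (y i))) * χ (e.symm y)
          else 0| := Finset.abs_sum_le_sum_abs _ _
    _ ≤ _ := Finset.sum_le_sum fun A _ => key A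
end

section
/- For any positive integers n, k, ℓ with ℓ ≤ k, the ℓ-party discrepancy of generalized inner product with respect to υ_{n,k,ℓ} satisfies disc_ℓ(GIP_{n,k}, υ_{n,k,ℓ}) ≤ (1 − 1/(2^{ℓ−1} · C(k,≤ℓ)))^n, where C(k,≤ℓ) = Σ_{i=0}^{ℓ} C(k,i). -/
open Finset

/-- `χ` is an `S`-cylinder intersection on `{0,1}^{n×k}`: a product over `j ∈ S` of
`{0,1}`-valued functions `φ j`, where `φ j` does not depend on the `j`-th column. -/
def IsCylinderOn (n k : ℕ) (S : Finset (Fin k))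
    (χ : (Fin n → Fin k → Bool) → ℝ) : Prop :=
  ∃ φ : Fin k → ((Fin n → Fin k → Bool) → ℝ),
    (∀ j ∈ S, ∀ X, φ j X = 0 ∨ φ j X = 1) ∧
    (∀ j ∈ S, ∀ X Y, (∀ i, ∀ j', j' ≠ j → X i j' = Y i j') → φ j X = φ j Y) ∧
    (∀ X, χ X = ∏ j ∈ S, φ j X)

/-- The `ℓ`-discrepancy of a Boolean function `F` on `{0,1}^{n×k}` with respect to
the distribution `μ`: the maximum over sets `S ⊆ {1,…,k}` with `|S| ≤ ℓ` and
`S`-cylinder intersections `χ` of `|Σ_X (−1)^{F(X)} μ(X) χ(X)|`. -/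
noncomputable def discL (n k ℓ : ℕ) (F : (Fin n → Fin k → Bool) → Bool)
    (μ : (Fin n → Fin k → Bool) → ℝ) : ℝ :=
  sSup {t : ℝ | ∃ S : Finset (Fin k), ∃ χ : (Fin n → Fin k → Bool) → ℝ,
    S.card ≤ ℓ ∧ IsCylinderOn n k S χ ∧
    t = |∑ X : Fin n → Fin k → Bool, (if F X then (-1 : ℝ) else 1) * μ X * χ X|}

/-- Generalized inner product: `GIP_{n,k}(X) = ⊕_{i=1}^n ∧_{j=1}^k X_{i,j}`, i.e.
the parity of the number of all-ones rows of `X`. -/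
def GIP (n k : ℕ) (X : Fin n → Fin k → Bool) : Bool :=
  decide ((Finset.univ.filter (fun i : Fin n => ∀ j, X i j = true)).card % 2 = 1)

/-- Hamming weight of `u ∈ {0,1}^k`. -/
def wt {k : ℕ} (u : Fin k → Bool) : ℕ :=
  (Finset.univ.filter (fun j => u j = true)).card

/-- The distribution `υ_{n,k,ℓ}` on `{0,1}^{n×k}`: the `n` rows are independent, each
uniform on `{u ∈ {0,1}^k : |u| ≥ k−ℓ}`. -/
noncomputable def upsilon (n k ℓ : ℕ) (X : Fin n → Fin k → Bool) : ℝ :=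
  ∏ i : Fin n,
    if k - ℓ ≤ wt (X i) then
      (1 : ℝ) / (Finset.univ.filter (fun u : Fin k → Bool => k - ℓ ≤ wt u)).card
    else 0


set_option linter.unusedSectionVars false
set_option linter.unusedVariables false
set_option maxHeartbeats 1000000

namespace Stmt7

section Split

variable {κ : Type*} [DecidableEq κ] {β : Type*}

def mk (j₀ : κ) (u : β) (W : {j : κ // j ≠ j₀} → β) : κ → β :=
  fun j => if h : j = j₀ then u else W ⟨j, h⟩

@[simp] lemma mk_self (j₀ : κ) (u : β) (W : {j : κ // j ≠ j₀} → β) : mk j₀ u W j₀ = u :=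
  dif_pos rfl

lemma mk_ne (j₀ : κ) (u : β) (W : {j : κ // j ≠ j₀} → β) {j : κ} (h : j ≠ j₀) :
    mk j₀ u W j = W ⟨j, h⟩ := dif_neg h

lemma update_mk (j₀ : κ) (u v : β) (W : {j : κ // j ≠ j₀} → β) :
    Function.update (mk j₀ u W) j₀ v = mk j₀ v W := by
  funext j
  by_cases h : j = j₀
  · subst h; simp
  · rw [Function.update_of_ne h, mk_ne _ _ _ h, mk_ne _ _ _ h]

def esplit (j₀ : κ) (β : Type*) : (β × ({j : κ // j ≠ j₀} → β)) ≃ (κ → β) where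
  toFun p := mk j₀ p.1 p.2
  invFun Y := (Y j₀, fun j => Y j.1)
  left_inv p := by
    refine Prod.ext (by simp) ?_
    funext j
    simp [mk_ne _ _ _ j.2]
  right_inv Y := by
    funext j
    by_cases h : j = j₀
    · subst h; simp
    · simp [mk_ne _ _ _ h]

variable [Fintype κ] [Fintype β] [DecidableEq β]

lemma sum_split (j₀ : κ) (F : (κ → β) → ℝ) :
    ∑ Y : κ → β, F Y = ∑ u : β, ∑ W : {j : κ // j ≠ j₀} → β, F (mk j₀ u W) := by
  rw [← Equiv.sum_comp (esplit j₀ β) F, Fintype.sum_prod_type]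
  rfl

lemma prod_split (j₀ : κ) (F : (κ → β) → ℝ) :
    ∏ Y : κ → β, F Y = ∏ u : β, ∏ W : {j : κ // j ≠ j₀} → β, F (mk j₀ u W) := by
  rw [← Equiv.prod_comp (esplit j₀ β) F, Fintype.prod_prod_type]
  rfl

lemma card_split (j₀ : κ) :
    Fintype.card (κ → β) = Fintype.card β * Fintype.card ({j : κ // j ≠ j₀} → β) :=
  ((Fintype.card_congr (esplit j₀ β).symm).trans (Fintype.card_prod _ _))

lemma sum_fun_prod {ι : Type*} [Fintype ι] [DecidableEq ι] (g : β → ℝ) :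
    ∑ f : ι → β, ∏ i : ι, g (f i) = (∑ u : β, g u) ^ (Fintype.card ι) := by
  classical
  rw [← Fintype.piFinset_univ, ← Finset.prod_univ_sum (fun _ => (univ : Finset β)) (fun _ u => g u)]
  simp [Finset.prod_const]

end Split

section Core

variable {ι κ : Type*} [Fintype ι] [Fintype κ] [DecidableEq ι] [DecidableEq κ]

/-- product over rows of `(-1)^{AND of row}` -/
noncomputable def msign (C : κ → ι → Bool) : ℝ :=
  ∏ i : ι, (if ∀ j, C j i = true then (-1 : ℝ) else 1)

def sel (Y Z : κ → ι → Bool) (z : κ → Bool) : κ → ι → Bool :=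
  fun j => if z j then Z j else Y j

def cube (T : Finset κ) : Finset (κ → Bool) :=
  univ.filter (fun z => ∀ j, z j = true → j ∈ T)

lemma mem_cube {T : Finset κ} {z : κ → Bool} : z ∈ cube T ↔ ∀ j, z j = true → j ∈ T := by
  simp [cube]

lemma cube_false {T : Finset κ} {z : κ → Bool} (hz : z ∈ cube T) {j : κ} (hj : j ∉ T) :
    z j = false := by
  rcases Bool.eq_false_or_eq_true (z j) with h | h
  · exact absurd (mem_cube.1 hz j h) hj
  · exact h

lemma cube_empty : cube (∅ : Finset κ) = {fun _ => false} := by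
  ext z
  simp only [mem_cube, Finset.mem_singleton]
  constructor
  · intro h
    funext j
    rcases Bool.eq_false_or_eq_true (z j) with hh | hh
    · exact absurd (h j hh) (Finset.notMem_empty j)
    · exact hh
  · rintro rfl j h
    exact absurd h (by simp)

lemma cube_univ : cube (univ : Finset κ) = univ := by
  ext z; simp [mem_cube]

lemma prod_cube_insert (T : Finset κ) (j₀ : κ) (hj₀ : j₀ ∉ T) (f : (κ → Bool) → ℝ) :
    ∏ z ∈ cube (insert j₀ T), f z
      = (∏ z ∈ cube T, f z) * ∏ z ∈ cube T, f (Function.update z j₀ true) := by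
  classical
  have himg : cube (insert j₀ T)
      = cube T ∪ (cube T).image (fun z => Function.update z j₀ true) := by
    ext z
    simp only [mem_cube, Finset.mem_union, Finset.mem_image]
    constructor
    · intro h
      rcases Bool.eq_false_or_eq_true (z j₀) with hz | hz
      case _ =>
        right
        refine ⟨Function.update z j₀ false, ?_, ?_⟩
        · intro j hj
          by_cases hjj : j = j₀
          · subst hjj; rw [Function.update_self] at hj; exact absurd hj (by simp)
          · rw [Function.update_of_ne hjj] at hj
            rcases Finset.mem_insert.1 (h j hj) with rfl | hmem
            · exact absurd rfl hjj
            · exact hmem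
        · funext j
          by_cases hjj : j = j₀
          · subst hjj; simp [hz]
          · simp [Function.update_of_ne hjj]
      case _ =>
        left
        intro j hj
        rcases Finset.mem_insert.1 (h j hj) with rfl | hmem
        · rw [hz] at hj; exact absurd hj (by simp)
        · exact hmem
    · rintro (h | ⟨w, hw, rfl⟩)
      · intro j hj
        exact Finset.mem_insert_of_mem (h j hj)
      · intro j hj
        by_cases hjj : j = j₀
        · subst hjj; exact Finset.mem_insert_self _ _
        · rw [Function.update_of_ne hjj] at hj
          exact Finset.mem_insert_of_mem (hw j hj)
  have hdisj : Disjoint (cube T) ((cube T).image (fun z => Function.update z j₀ true)) := by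
    rw [Finset.disjoint_left]
    rintro z hz hz'
    rcases Finset.mem_image.1 hz' with ⟨w, hw, rfl⟩
    have h1 : Function.update w j₀ true j₀ = true := Function.update_self _ _ _
    have h2 := cube_false hz hj₀
    rw [h2] at h1
    exact Bool.false_ne_true h1
  have hinj : ∀ x ∈ cube T, ∀ y ∈ cube T,
      Function.update x j₀ true = Function.update y j₀ true → x = y := by
    intro x hx y hy h
    funext j
    by_cases hjj : j = j₀
    · subst hjj; rw [cube_false hx hj₀, cube_false hy hj₀]
    · have := congrFun h j
      rwa [Function.update_of_ne hjj, Function.update_of_ne hjj] at this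
  rw [himg, Finset.prod_union hdisj, Finset.prod_image hinj]

variable (φ : κ → (κ → ι → Bool) → ℝ)

noncomputable def GG (T : Finset κ) (C : κ → ι → Bool) : ℝ :=
  msign C * ∏ j ∈ Tᶜ, φ j C

noncomputable def SS (T : Finset κ) : ℝ :=
  ∑ Y : κ → ι → Bool, ∑ Z : κ → ι → Bool, ∏ z ∈ cube T, GG φ T (sel Y Z z)

lemma GG_split {T : Finset κ} {j₀ : κ} (hj₀ : j₀ ∉ T) (C : κ → ι → Bool) :
    GG φ T C = φ j₀ C * GG φ (insert j₀ T) C := by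
  unfold GG
  rw [Finset.compl_insert, ← Finset.mul_prod_erase Tᶜ _ (Finset.mem_compl.2 hj₀)]
  ring

lemma sum_sum_update (j₀ : κ) (g : (κ → ι → Bool) → ℝ) :
    ∑ u' : ι → Bool, ∑ Z : κ → ι → Bool, g (Function.update Z j₀ u')
      = (Fintype.card (ι → Bool) : ℝ) * ∑ Z : κ → ι → Bool, g Z := by
  have h1 : ∀ u' : ι → Bool,
      ∑ Z : κ → ι → Bool, g (Function.update Z j₀ u')
        = (Fintype.card (ι → Bool) : ℝ) * ∑ W : {j : κ // j ≠ j₀} → ι → Bool, g (mk j₀ u' W) := by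
    intro u'
    rw [sum_split j₀ (fun Z => g (Function.update Z j₀ u'))]
    have : ∀ v : ι → Bool, ∀ W, g (Function.update (mk j₀ v W) j₀ u') = g (mk j₀ u' W) := by
      intro v W; rw [update_mk]
    simp only [this]
    rw [Finset.sum_const, Finset.card_univ, nsmul_eq_mul]
  simp only [h1]
  rw [← Finset.mul_sum, ← sum_split j₀ g]

lemma step (hb : ∀ j C, |φ j C| ≤ 1)
    (hind : ∀ j (C C' : κ → ι → Bool), (∀ j', j' ≠ j → C j' = C' j') → φ j C = φ j C')
    (T : Finset κ) (j₀ : κ) (hj₀ : j₀ ∉ T) :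
    (SS φ T) ^ 2 ≤ ((Fintype.card (κ → ι → Bool) : ℝ)) ^ 2 * SS φ (insert j₀ T) := by
  classical
  set T' := insert j₀ T with hT'
  set Wsp := ({j : κ // j ≠ j₀} → ι → Bool)
  set H : (ι → Bool) → Wsp × (κ → ι → Bool) → ℝ :=
    fun u r => ∏ z ∈ cube T, GG φ T' (sel (mk j₀ u r.1) r.2 z) with hH
  set Ψ : Wsp × (κ → ι → Bool) → ℝ :=
    fun r => ∏ z ∈ cube T, φ j₀ (sel (mk j₀ (fun _ => true) r.1) r.2 z) with hΨ
  -- step 1 : SS φ T = ∑ r, Ψ r * ∑ u, H u r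
  have hsel_indep : ∀ (u u' : ι → Bool) (W : Wsp) (Z : κ → ι → Bool) (z : κ → Bool) (j' : κ),
      j' ≠ j₀ → sel (mk j₀ u W) Z z j' = sel (mk j₀ u' W) Z z j' := by
    intro u u' W Z z j' hj'
    simp only [sel, mk_ne _ _ _ hj']
  have step1 : SS φ T = ∑ r : Wsp × (κ → ι → Bool), Ψ r * ∑ u : ι → Bool, H u r := by
    unfold SS
    rw [sum_split j₀ (fun Y => ∑ Z : κ → ι → Bool, ∏ z ∈ cube T, GG φ T (sel Y Z z))]
    rw [Finset.sum_comm]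
    have inner : ∀ W : Wsp, ∑ u : ι → Bool, ∑ Z : κ → ι → Bool,
          ∏ z ∈ cube T, GG φ T (sel (mk j₀ u W) Z z)
        = ∑ Z : κ → ι → Bool, Ψ (W, Z) * ∑ u : ι → Bool, H u (W, Z) := by
      intro W
      rw [Finset.sum_comm]
      refine Finset.sum_congr rfl (fun Z _ => ?_)
      rw [Finset.mul_sum]
      refine Finset.sum_congr rfl (fun u _ => ?_)
      have hfac : ∀ z ∈ cube T,
          GG φ T (sel (mk j₀ u W) Z z)
            = φ j₀ (sel (mk j₀ (fun _ => true) W) Z z) * GG φ T' (sel (mk j₀ u W) Z z) := by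
        intro z _
        rw [GG_split φ hj₀]
        congr 1
        refine hind j₀ _ _ (fun j' hj' => ?_)
        funext i
        rw [hsel_indep u (fun _ => true) W Z z j' hj']
      rw [Finset.prod_congr rfl hfac, Finset.prod_mul_distrib]
    simp only [inner]
    rw [Fintype.sum_prod_type]
  -- step 2/3/4 : Cauchy-Schwarz
  have hCS := Finset.sum_mul_sq_le_sq_mul_sq univ Ψ (fun r => ∑ u : ι → Bool, H u r)
  have hΨ2 : ∑ r : Wsp × (κ → ι → Bool), Ψ r ^ 2
      ≤ (Fintype.card (Wsp × (κ → ι → Bool)) : ℝ) := by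
    have h1 : ∀ r : Wsp × (κ → ι → Bool), Ψ r ^ 2 ≤ 1 := by
      intro r
      rw [sq_le_one_iff_abs_le_one, hΨ]
      calc |∏ z ∈ cube T, φ j₀ (sel (mk j₀ (fun _ => true) r.1) r.2 z)|
          = ∏ z ∈ cube T, |φ j₀ (sel (mk j₀ (fun _ => true) r.1) r.2 z)| := by
            rw [Finset.abs_prod]
        _ ≤ 1 := Finset.prod_le_one (fun _ _ => abs_nonneg _) (fun _ _ => hb _ _)
    calc ∑ r : Wsp × (κ → ι → Bool), Ψ r ^ 2 ≤ ∑ _r : Wsp × (κ → ι → Bool), (1 : ℝ) :=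
          Finset.sum_le_sum (fun r _ => h1 r)
      _ = (Fintype.card (Wsp × (κ → ι → Bool)) : ℝ) := by
          rw [Finset.sum_const, Finset.card_univ, nsmul_eq_mul, mul_one]
  -- step 5 : product over doubled cube
  have step5 : ∀ (u u' : ι → Bool) (W : Wsp) (Z : κ → ι → Bool),
      H u (W, Z) * H u' (W, Z)
        = ∏ z ∈ cube T', GG φ T' (sel (mk j₀ u W) (Function.update Z j₀ u') z) := by
    intro u u' W Z
    rw [hT', prod_cube_insert T j₀ hj₀]
    congr 1
    · refine Finset.prod_congr rfl (fun z hz => ?_)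
      congr 1
      funext j i
      by_cases hzj : z j = true
      · have hjT : j ∈ T := mem_cube.1 hz j hzj
        have hjne : j ≠ j₀ := fun h => hj₀ (h ▸ hjT)
        simp [sel, hzj, Function.update_of_ne hjne]
      · have hzf : z j = false := by
          rcases Bool.eq_false_or_eq_true (z j) with h | h
          · exact absurd h hzj
          · exact h
        simp [sel, hzf]
    · refine Finset.prod_congr rfl (fun z hz => ?_)
      congr 1
      funext j i
      by_cases hjj : j = j₀
      · have hz0 : z j₀ = false := cube_false hz hj₀
        subst hjj
        simp [sel, hz0]
      · by_cases hzj : z j = true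
        · simp [sel, Function.update_of_ne hjj, hzj]
        · have hzf : z j = false := by
            rcases Bool.eq_false_or_eq_true (z j) with h | h
            · exact absurd h hzj
            · exact h
          simp [sel, Function.update_of_ne hjj, hzf, mk_ne _ _ _ hjj]
  -- step 6 : reindex
  have step6 : ∑ r : Wsp × (κ → ι → Bool), (∑ u : ι → Bool, H u r) ^ 2
      = (Fintype.card (ι → Bool) : ℝ) * SS φ T' := by
    have hsq : ∀ r : Wsp × (κ → ι → Bool),
        (∑ u : ι → Bool, H u r) ^ 2
          = ∑ u : ι → Bool, ∑ u' : ι → Bool, H u r * H u' r := by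
      intro r
      rw [sq, Finset.sum_mul_sum]
    simp only [hsq]
    rw [Fintype.sum_prod_type]
    have h1 : ∀ W : Wsp, ∑ Z : κ → ι → Bool, ∑ u : ι → Bool, ∑ u' : ι → Bool,
          H u (W, Z) * H u' (W, Z)
        = (Fintype.card (ι → Bool) : ℝ) * ∑ Z : κ → ι → Bool, ∑ u : ι → Bool,
            ∏ z ∈ cube T', GG φ T' (sel (mk j₀ u W) Z z) := by
      intro W
      rw [Finset.sum_comm]
      have h2 : ∀ u : ι → Bool, ∑ Z : κ → ι → Bool, ∑ u' : ι → Bool,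
            H u (W, Z) * H u' (W, Z)
          = (Fintype.card (ι → Bool) : ℝ) * ∑ Z : κ → ι → Bool,
              ∏ z ∈ cube T', GG φ T' (sel (mk j₀ u W) Z z) := by
        intro u
        rw [Finset.sum_comm]
        have h3 : ∀ (u' : ι → Bool) (Z : κ → ι → Bool), H u (W, Z) * H u' (W, Z)
            = (fun Z' => ∏ z ∈ cube T', GG φ T' (sel (mk j₀ u W) Z' z))
                (Function.update Z j₀ u') := fun u' Z => step5 u u' W Z
        simp only [h3]
        exact sum_sum_update j₀ (fun Z' => ∏ z ∈ cube T', GG φ T' (sel (mk j₀ u W) Z' z))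
      simp only [h2]
      rw [← Finset.mul_sum, Finset.sum_comm]
    simp only [h1]
    rw [← Finset.mul_sum]
    congr 1
    unfold SS
    rw [sum_split j₀ (fun Y => ∑ Z : κ → ι → Bool, ∏ z ∈ cube T', GG φ T' (sel Y Z z))]
    have reorder : ∀ F : Wsp → (κ → ι → Bool) → (ι → Bool) → ℝ,
        ∑ x : Wsp, ∑ y : κ → ι → Bool, ∑ u : ι → Bool, F x y u
          = ∑ u : ι → Bool, ∑ x : Wsp, ∑ y : κ → ι → Bool, F x y u := by
      intro F
      calc ∑ x : Wsp, ∑ y : κ → ι → Bool, ∑ u : ι → Bool, F x y u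
          = ∑ x : Wsp, ∑ u : ι → Bool, ∑ y : κ → ι → Bool, F x y u :=
            Finset.sum_congr rfl (fun x _ => Finset.sum_comm)
        _ = ∑ u : ι → Bool, ∑ x : Wsp, ∑ y : κ → ι → Bool, F x y u := Finset.sum_comm
    exact reorder (fun x y u => ∏ z ∈ cube T', GG φ T' (sel (mk j₀ u x) y z))
  -- combine
  have hcard : (Fintype.card (Wsp × (κ → ι → Bool)) : ℝ) * (Fintype.card (ι → Bool) : ℝ)
      = ((Fintype.card (κ → ι → Bool) : ℝ)) ^ 2 := by
    rw [Fintype.card_prod]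
    push_cast
    rw [card_split j₀ (β := ι → Bool)]
    push_cast
    ring
  have hF2nonneg : (0 : ℝ) ≤ ∑ r : Wsp × (κ → ι → Bool), (∑ u : ι → Bool, H u r) ^ 2 :=
    Finset.sum_nonneg (fun r _ => sq_nonneg _)
  calc (SS φ T) ^ 2
      = (∑ r : Wsp × (κ → ι → Bool), Ψ r * ∑ u : ι → Bool, H u r) ^ 2 := by rw [step1]
    _ ≤ (∑ r : Wsp × (κ → ι → Bool), Ψ r ^ 2)
          * ∑ r : Wsp × (κ → ι → Bool), (∑ u : ι → Bool, H u r) ^ 2 := hCS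
    _ ≤ (Fintype.card (Wsp × (κ → ι → Bool)) : ℝ)
          * ∑ r : Wsp × (κ → ι → Bool), (∑ u : ι → Bool, H u r) ^ 2 :=
        mul_le_mul_of_nonneg_right hΨ2 hF2nonneg
    _ = (Fintype.card (Wsp × (κ → ι → Bool)) : ℝ)
          * ((Fintype.card (ι → Bool) : ℝ) * SS φ T') := by rw [step6]
    _ = ((Fintype.card (κ → ι → Bool) : ℝ)) ^ 2 * SS φ T' := by rw [← mul_assoc, hcard]

lemma SS_empty : SS φ ∅
    = (Fintype.card (κ → ι → Bool) : ℝ) * ∑ C : κ → ι → Bool, msign C * ∏ j : κ, φ j C := by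
  unfold SS
  rw [cube_empty]
  have hsel : ∀ Y Z : κ → ι → Bool, sel Y Z (fun _ => false) = Y := by
    intro Y Z; funext j; simp [sel]
  have hGG : ∀ Y : κ → ι → Bool, GG φ ∅ Y = msign Y * ∏ j : κ, φ j Y := by
    intro Y; unfold GG; rw [Finset.compl_empty]
  simp only [Finset.prod_singleton, hsel, hGG, Finset.sum_const, Finset.card_univ,
    nsmul_eq_mul]
  rw [← Finset.mul_sum]

lemma chain (hb : ∀ j C, |φ j C| ≤ 1)
    (hind : ∀ j (C C' : κ → ι → Bool), (∀ j', j' ≠ j → C j' = C' j') → φ j C = φ j C')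
    (T : Finset κ) (hT : T.Nonempty) :
    |SS φ ∅| ^ (2 ^ T.card)
      ≤ (Fintype.card (κ → ι → Bool) : ℝ) ^ (2 * (2 ^ T.card - 1)) * SS φ T := by
  induction hT using Finset.Nonempty.cons_induction with
  | singleton a =>
    have h := step φ hb hind ∅ a (Finset.notMem_empty a)
    rw [Finset.card_singleton]
    have h1 : |SS φ ∅| ^ (2 ^ 1) = (SS φ ∅) ^ 2 := by
      rw [pow_one, sq_abs]
    rw [h1]
    have h2 : (2 : ℕ) * (2 ^ 1 - 1) = 2 := by norm_num
    rw [h2]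
    simpa using h
  | cons a s ha hs ih =>
    have hM0 : (0 : ℝ) ≤ (Fintype.card (κ → ι → Bool) : ℝ) := Nat.cast_nonneg _
    have hstep := step φ hb hind s a ha
    rw [Finset.card_cons]
    have habs0 : (0 : ℝ) ≤ |SS φ ∅| ^ (2 ^ s.card) := pow_nonneg (abs_nonneg _) _
    have hsq : (|SS φ ∅| ^ (2 ^ s.card)) ^ 2
        ≤ ((Fintype.card (κ → ι → Bool) : ℝ) ^ (2 * (2 ^ s.card - 1)) * SS φ s) ^ 2 :=
      pow_le_pow_left₀ habs0 ih 2
    have hexp : |SS φ ∅| ^ (2 ^ (s.card + 1)) = (|SS φ ∅| ^ (2 ^ s.card)) ^ 2 := by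
      rw [← pow_mul, pow_succ]
    rw [hexp]
    have hSScons : SS φ (Finset.cons a s ha) = SS φ (insert a s) := by
      rw [Finset.cons_eq_insert]
    rw [hSScons]
    calc (|SS φ ∅| ^ (2 ^ s.card)) ^ 2
        ≤ ((Fintype.card (κ → ι → Bool) : ℝ) ^ (2 * (2 ^ s.card - 1)) * SS φ s) ^ 2 := hsq
      _ = (Fintype.card (κ → ι → Bool) : ℝ) ^ (2 * (2 * (2 ^ s.card - 1))) * (SS φ s) ^ 2 := by
          rw [mul_pow, ← pow_mul]
          ring_nf
      _ ≤ (Fintype.card (κ → ι → Bool) : ℝ) ^ (2 * (2 * (2 ^ s.card - 1)))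
            * ((Fintype.card (κ → ι → Bool) : ℝ) ^ 2 * SS φ (insert a s)) :=
          mul_le_mul_of_nonneg_left hstep (pow_nonneg hM0 _)
      _ = (Fintype.card (κ → ι → Bool) : ℝ) ^ (2 * (2 ^ (s.card + 1) - 1))
            * SS φ (insert a s) := by
          rw [← mul_assoc, ← pow_add]
          congr 2
          have h1 : 1 ≤ 2 ^ s.card := Nat.one_le_two_pow
          omega

lemma prod_corner (y z : κ → Bool) :
    ∏ w : κ → Bool, (if ∀ j, (if w j then z j else y j) = true then (-1 : ℝ) else 1)
      = if ∀ j, y j = !z j then (-1 : ℝ) else 1 := by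
  classical
  by_cases hmix : ∀ j, y j = !z j
  · rw [if_pos hmix]
    rw [Finset.prod_eq_single z]
    · rw [if_pos]
      intro j
      rcases Bool.eq_false_or_eq_true (z j) with h | h
      · simp [h]
      · have hy : y j = true := by rw [hmix j, h]; rfl
        simp [h, hy]
    · intro w _ hwz
      rw [if_neg]
      intro hall
      apply hwz
      funext j
      specialize hall j
      rcases Bool.eq_false_or_eq_true (w j) with hw | hw
      · rw [hw] at hall ⊢
        simp only [if_pos rfl] at hall
        exact hall.symm
      · rw [hw] at hall ⊢
        simp only [Bool.false_eq_true, if_false] at hall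
        have := hmix j
        rw [hall] at this
        simp at this
        exact this.symm
    · intro h
      exact absurd (Finset.mem_univ z) h
  · rw [if_neg hmix]
    push_neg at hmix
    obtain ⟨j₀, hj₀⟩ := hmix
    have heq : y j₀ = z j₀ := by
      rcases Bool.eq_false_or_eq_true (y j₀) with h1 | h1 <;>
        rcases Bool.eq_false_or_eq_true (z j₀) with h2 | h2 <;>
          simp_all
    rcases Bool.eq_false_or_eq_true (z j₀) with hz | hz
    · -- both true : pair up on w j₀
      have hy : y j₀ = true := heq.trans hz
      have hps := prod_split j₀
        (fun w : κ → Bool => if ∀ j, (if w j then z j else y j) = true then (-1 : ℝ) else 1)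
      rw [hps, Fintype.prod_bool, ← Finset.prod_mul_distrib]
      apply Finset.prod_eq_one
      intro W _
      have hcond : (∀ j, (if mk j₀ true W j then z j else y j) = true)
          ↔ (∀ j, (if mk j₀ false W j then z j else y j) = true) := by
        constructor <;> intro hall j <;>
        · by_cases hjj : j = j₀
          · subst hjj
            simp [hz, hy]
          · have := hall j
            rwa [mk_ne _ _ _ hjj] at this ⊢
      by_cases hc : ∀ j, (if mk j₀ false W j then z j else y j) = true
      · rw [if_pos hc, if_pos (hcond.2 hc)]
        norm_num
      · rw [if_neg hc, if_neg (fun h => hc (hcond.1 h))]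
        norm_num
    · -- both false : every factor is 1
      have hy : y j₀ = false := heq.trans hz
      apply Finset.prod_eq_one
      intro w _
      rw [if_neg]
      intro hall
      have := hall j₀
      rcases Bool.eq_false_or_eq_true (w j₀) with hw | hw <;> simp_all

lemma SS_univ : SS φ univ
    = ((Fintype.card (κ → Bool) : ℝ) ^ 2 - 2 * (Fintype.card (κ → Bool) : ℝ))
        ^ (Fintype.card ι) := by
  classical
  unfold SS
  rw [cube_univ]
  have hGG : ∀ C, GG φ (univ : Finset κ) C = msign C := by
    intro C; unfold GG; rw [Finset.compl_univ, Finset.prod_empty, mul_one]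
  simp only [hGG]
  have hmsign : ∀ Y Z : κ → ι → Bool,
      ∏ zz : κ → Bool, msign (sel Y Z zz)
        = ∏ i : ι, ∏ zz : κ → Bool,
            (if ∀ j, (if zz j then Z j i else Y j i) = true then (-1 : ℝ) else 1) := by
    intro Y Z
    rw [← Finset.prod_comm]
    refine Finset.prod_congr rfl (fun zz _ => ?_)
    unfold msign
    refine Finset.prod_congr rfl (fun i _ => ?_)
    have : (∀ j, sel Y Z zz j i = true) ↔ (∀ j, (if zz j then Z j i else Y j i) = true) := by
      constructor <;> intro h j <;>
      · have := h j
        simpa [sel, ite_apply] using this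
    simp only [this]
  simp only [hmsign]
  have hcorner : ∀ Y Z : κ → ι → Bool, ∀ i : ι,
      ∏ zz : κ → Bool, (if ∀ j, (if zz j then Z j i else Y j i) = true then (-1 : ℝ) else 1)
        = if ∀ j, (fun j' => Y j' i) j = !(fun j' => Z j' i) j then (-1 : ℝ) else 1 :=
    fun Y Z i => prod_corner (fun j => Y j i) (fun j => Z j i)
  simp only [hcorner]
  -- transpose Z and sum it out
  have htr : ∀ F : (κ → ι → Bool) → ℝ, ∑ Y : κ → ι → Bool, F Y
      = ∑ Y' : ι → κ → Bool, F (fun j i => Y' i j) := by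
    intro F
    exact (Fintype.sum_equiv (Equiv.piComm (fun (_ : ι) (_ : κ) => Bool))
      (fun Y' => F (fun j i => Y' i j)) F (fun Y' => rfl)).symm
  have hval_eq : ∀ y z : κ → Bool,
      (if ∀ j, y j = !z j then (-1 : ℝ) else 1)
        = 1 - 2 * (if z = (fun j => !y j) then (1 : ℝ) else 0) := by
    intro y z
    by_cases h : z = fun j => !y j
    · have hc : ∀ j, y j = !z j := by
        intro j
        rw [h]
        simp
      rw [if_pos hc, if_pos h]
      norm_num
    · have hc : ¬ ∀ j, y j = !z j := by
        intro hall
        apply h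
        funext j
        rw [hall j]
        simp
      rw [if_neg hc, if_neg h]
      norm_num
  have hinner : ∀ y : κ → Bool,
      ∑ z : κ → Bool, (if ∀ j, y j = !z j then (-1 : ℝ) else 1)
        = (Fintype.card (κ → Bool) : ℝ) - 2 := by
    intro y
    simp only [hval_eq]
    rw [Finset.sum_sub_distrib, ← Finset.mul_sum]
    rw [Finset.sum_ite_eq' univ (fun j => !y j) (fun _ => (1 : ℝ))]
    simp [Finset.card_univ]
  have hZ : ∀ Y : κ → ι → Bool,
      ∑ Z : κ → ι → Bool, ∏ i : ι, (if ∀ j, Y j i = !Z j i then (-1 : ℝ) else 1)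
        = ((Fintype.card (κ → Bool) : ℝ) - 2) ^ (Fintype.card ι) := by
    intro Y
    rw [htr (fun Z => ∏ i : ι, (if ∀ j, Y j i = !Z j i then (-1 : ℝ) else 1))]
    have hfam : ∑ Z' : ι → κ → Bool, ∏ i : ι,
          (if ∀ j, Y j i = !Z' i j then (-1 : ℝ) else 1)
        = ∏ i : ι, ∑ z : κ → Bool, (if ∀ j, Y j i = !z j then (-1 : ℝ) else 1) := by
      rw [← Fintype.piFinset_univ,
        ← Finset.prod_univ_sum (fun _ => (univ : Finset (κ → Bool)))
          (fun i z => if ∀ j, Y j i = !z j then (-1 : ℝ) else 1)]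
    rw [hfam]
    rw [Finset.prod_congr rfl (fun i _ => hinner (fun j => Y j i))]
    rw [Finset.prod_const, Finset.card_univ]
  simp only [hZ]
  rw [Finset.sum_const, Finset.card_univ, nsmul_eq_mul]
  have hcardmat : (Fintype.card (κ → ι → Bool) : ℝ)
      = (Fintype.card (κ → Bool) : ℝ) ^ (Fintype.card ι) := by
    rw [Fintype.card_fun, Fintype.card_fun, Fintype.card_fun]
    push_cast
    rw [← pow_mul, ← pow_mul, mul_comm]
  rw [hcardmat, ← mul_pow]
  congr 1
  ring

lemma card_mat_real : (Fintype.card (κ → ι → Bool) : ℝ)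
    = (Fintype.card (κ → Bool) : ℝ) ^ (Fintype.card ι) := by
  rw [Fintype.card_fun, Fintype.card_fun, Fintype.card_fun]
  push_cast
  rw [← pow_mul, ← pow_mul, mul_comm]

theorem core_bound [Nonempty κ] (hb01 : ∀ j C, φ j C = 0 ∨ φ j C = 1)
    (hind : ∀ j (C C' : κ → ι → Bool), (∀ j', j' ≠ j → C j' = C' j') → φ j C = φ j C') :
    |∑ C : κ → ι → Bool, msign C * ∏ j : κ, φ j C|
      ≤ ((2 : ℝ) ^ (Fintype.card κ) - 2 / 2 ^ (Fintype.card κ)) ^ (Fintype.card ι) := by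
  classical
  set s := Fintype.card κ with hsdef
  set m := Fintype.card ι with hmdef
  have hs1 : 1 ≤ s := Fintype.card_pos
  have hb : ∀ j C, |φ j C| ≤ 1 := by
    intro j C
    rcases hb01 j C with h | h <;> rw [h] <;> norm_num
  set X : ℝ := ((2 : ℝ) ^ s) with hXdef
  have hMc : (Fintype.card (κ → Bool) : ℝ) = X := by
    rw [Fintype.card_fun, Fintype.card_bool]
    push_cast
    rfl
  have hX2 : (2 : ℝ) ≤ X := by
    rw [hXdef]
    calc (2:ℝ) = 2 ^ 1 := (pow_one 2).symm
      _ ≤ 2 ^ s := by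
          apply pow_le_pow_right₀ (by norm_num) hs1
  have hXpos : (0 : ℝ) < X := lt_of_lt_of_le (by norm_num) hX2
  set q := 2 ^ s with hqdef
  have hq2 : 2 ≤ q := by
    rw [hqdef]
    calc 2 = 2 ^ 1 := (pow_one 2).symm
      _ ≤ 2 ^ s := Nat.pow_le_pow_right (by norm_num) hs1
  obtain ⟨r, hr⟩ : ∃ r, q = r + 2 := ⟨q - 2, by omega⟩
  have hqX : ((q : ℝ)) = X := by
    rw [hqdef, hXdef]
    push_cast
    rfl
  have hchain := chain φ hb hind univ univ_nonempty
  rw [SS_empty φ, SS_univ φ, Finset.card_univ] at hchain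
  set Γ : ℝ := ∑ C : κ → ι → Bool, msign C * ∏ j : κ, φ j C with hΓdef
  set M : ℝ := (Fintype.card (κ → ι → Bool) : ℝ) with hMdef
  have hMpos : (0 : ℝ) < M := by
    rw [hMdef]
    exact_mod_cast Fintype.card_pos
  have habs : |M * Γ| = M * |Γ| := by
    rw [abs_mul, abs_of_pos hMpos]
  rw [habs, mul_pow] at hchain
  -- split off M ^ q
  have hexp : 2 * (2 ^ s - 1) = q + (q - 2) := by
    rw [hqdef] at hq2 ⊢
    omega
  rw [hexp, pow_add] at hchain
  -- hchain : M^q * |Γ|^q ≤ M^q * M^(q-2) * stuff  (up to assoc/comm)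
  have hchain2 : |Γ| ^ q
      ≤ M ^ (q - 2) * ((Fintype.card (κ → Bool) : ℝ) ^ 2
          - 2 * (Fintype.card (κ → Bool) : ℝ)) ^ m := by
    have h := hchain
    have hMqpos : (0 : ℝ) < M ^ q := pow_pos hMpos q
    apply le_of_mul_le_mul_left _ hMqpos
    calc M ^ q * |Γ| ^ q ≤ M ^ q * M ^ (q - 2)
          * ((Fintype.card (κ → Bool) : ℝ) ^ 2
              - 2 * (Fintype.card (κ → Bool) : ℝ)) ^ m := by
          rw [hqdef]
          exact h
      _ = M ^ q * (M ^ (q - 2) * ((Fintype.card (κ → Bool) : ℝ) ^ 2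
              - 2 * (Fintype.card (κ → Bool) : ℝ)) ^ m) := by ring
  rw [hMc] at hchain2
  have hM_X : M = X ^ m := by
    rw [hMdef, card_mat_real, hMc]
  rw [hM_X, ← pow_mul, mul_comm m (q-2), pow_mul] at hchain2
  have hchain3 : |Γ| ^ q ≤ (X ^ (r + 1) * (X - 2)) ^ m := by
    refine hchain2.trans (le_of_eq ?_)
    rw [← mul_pow]
    congr 1
    have hq2' : q - 2 = r := by omega
    rw [hq2']
    ring
  -- key inequality : X^(r+1) * (X-2) ≤ (X - 2/X)^q
  have hXne : X ≠ 0 := ne_of_gt hXpos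
  have hkey : X ^ (r + 1) * (X - 2) ≤ (X - 2 / X) ^ q := by
    have hber := one_add_mul_le_pow (a := -2 / X ^ 2)
      (by
        have hx2pos : (0:ℝ) < X ^ 2 := pow_pos hXpos 2
        have h4 : (4:ℝ) ≤ X ^ 2 := by nlinarith
        have hd : -2 / X ^ 2 ≥ -2 := by
          rw [ge_iff_le, neg_le, ← neg_div, neg_neg]
          rw [div_le_iff₀ hx2pos]
          nlinarith
        exact hd) (r + 2)
    have hmulkey : X ^ (2 * r + 3) * (X - 2) ≤ (X ^ 2 - 2) ^ (r + 2) := by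
      have h1 : (X ^ 2 - 2) ^ (r + 2) = (X ^ 2) ^ (r + 2) * (1 + -2 / X ^ 2) ^ (r + 2) := by
        rw [← mul_pow]
        congr 1
        field_simp
        ring
      rw [h1]
      have h2 : X ^ (2 * r + 3) * (X - 2)
          = (X ^ 2) ^ (r + 2) * (1 + ((r : ℝ) + 2) * (-2 / X ^ 2)) := by
        have hrX : ((r : ℝ) + 2) = X := by
          rw [← hqX, hr]
          push_cast
          ring
        rw [hrX]
        field_simp
        ring
      rw [h2]
      apply mul_le_mul_of_nonneg_left _ (pow_nonneg (sq_nonneg X) _)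
      exact_mod_cast hber
    have hfin : (X - 2 / X) ^ q * X ^ q = (X ^ 2 - 2) ^ (r + 2) := by
      rw [← mul_pow, hr]
      congr 1
      field_simp
    apply le_of_mul_le_mul_right _ (pow_pos hXpos q)
    rw [hfin, hr]
    calc X ^ (r + 1) * (X - 2) * X ^ (r + 2) = X ^ (2 * r + 3) * (X - 2) := by ring
      _ ≤ (X ^ 2 - 2) ^ (r + 2) := hmulkey
  -- conclude
  have hbase0 : (0 : ℝ) ≤ X ^ (r + 1) * (X - 2) := by
    apply mul_nonneg (pow_nonneg (le_of_lt hXpos) _)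
    linarith
  have hB0 : (0 : ℝ) ≤ X - 2 / X := by
    have : 2 / X ≤ 1 := by
      rw [div_le_one hXpos]
      exact hX2
    linarith
  have hfinal : |Γ| ^ q ≤ ((X - 2 / X) ^ m) ^ q := by
    rw [← pow_mul, mul_comm m q, pow_mul]
    refine hchain3.trans ?_
    exact pow_le_pow_left₀ hbase0 hkey m
  have := (pow_le_pow_iff_left₀ (abs_nonneg Γ) (pow_nonneg hB0 m) (by omega : q ≠ 0)).mp hfinal
  exact this

end Core

-- application layer
section App

variable (k ℓ : ℕ)

def zct {k : ℕ} (u : Fin k → Bool) : ℕ :=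
  (Finset.univ.filter (fun j => u j = false)).card

lemma wt_add_zct {k : ℕ} (u : Fin k → Bool) : wt u + zct u = k := by
  unfold wt zct
  have h := Finset.card_filter_add_card_filter_not
    (s := (univ : Finset (Fin k))) (p := fun j => u j = true)
  simp only [Finset.card_univ, Fintype.card_fin] at h
  have h2 : (filter (fun j => u j = false) univ) = (filter (fun a => ¬ u a = true) univ) := by
    ext j
    simp [Bool.not_eq_true]
  rw [h2]
  exact h

noncomputable def sgn {k : ℕ} (u : Fin k → Bool) : ℝ :=
  if ∀ j, u j = true then (-1 : ℝ) else 1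

lemma gip_sign (n : ℕ) (X : Fin n → Fin k → Bool) :
    (if GIP n k X then (-1 : ℝ) else 1) = ∏ i : Fin n, sgn (X i) := by
  unfold GIP sgn
  have h1 : ∏ i : Fin n, (if ∀ j, X i j = true then (-1 : ℝ) else 1)
      = (-1 : ℝ) ^ (univ.filter (fun i : Fin n => ∀ j, X i j = true)).card := by
    rw [Finset.prod_ite, Finset.prod_const, Finset.prod_const, one_pow, mul_one]
  rw [h1]
  by_cases h : (univ.filter (fun i : Fin n => ∀ j, X i j = true)).card % 2 = 1
  · rw [if_pos (by simpa using h)]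
    exact (Odd.neg_one_pow (Nat.odd_iff.2 h)).symm
  · rw [if_neg (by simpa using h)]
    exact (Even.neg_one_pow (Nat.even_iff.2 (by omega))).symm

/-- zero set of a row -/
def zs {k : ℕ} (u : Fin k → Bool) : Finset (Fin k) :=
  univ.filter (fun j => u j = false)

lemma card_zs {k : ℕ} (u : Fin k → Bool) : (zs u).card = zct u := rfl

lemma zfun_spec {k : ℕ} (Z : Finset (Fin k)) (j : Fin k) :
    (!(decide (j ∈ Z))) = false ↔ j ∈ Z := by
  by_cases h : j ∈ Z <;> simp [h]

lemma zs_zfun {k : ℕ} (Z : Finset (Fin k)) : zs (fun j => !(decide (j ∈ Z))) = Z := by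
  ext j
  simp only [zs, Finset.mem_filter, Finset.mem_univ, true_and]
  exact zfun_spec Z j

lemma zfun_zs {k : ℕ} (u : Fin k → Bool) : (fun j => !(decide (j ∈ zs u))) = u := by
  funext j
  simp only [zs, Finset.mem_filter, Finset.mem_univ, true_and]
  rcases Bool.eq_false_or_eq_true (u j) with h | h <;> simp [h]

def FreeS {k : ℕ} (S : Finset (Fin k)) : Finset (Fin k → Bool) :=
  univ.filter (fun u => ∀ j ∉ S, u j = true)

lemma mem_FreeS {k : ℕ} {S : Finset (Fin k)} {u : Fin k → Bool} :
    u ∈ FreeS S ↔ ∀ j ∉ S, u j = true := by simp [FreeS]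

lemma card_FreeS {k : ℕ} (S : Finset (Fin k)) : (FreeS S).card = 2 ^ S.card := by
  rw [← Finset.card_powerset]
  apply Finset.card_bij (fun u _ => zs u)
  · intro u hu
    rw [Finset.mem_powerset]
    intro j hj
    rw [mem_FreeS] at hu
    simp only [zs, Finset.mem_filter, Finset.mem_univ, true_and] at hj
    by_contra hjS
    rw [hu j hjS] at hj
    simp at hj
  · intro a ha b hb h
    have := congrArg (fun Z => (fun j => !(decide (j ∈ Z)))) h
    simpa [zfun_zs] using this
  · intro Z hZ
    refine ⟨fun j => !(decide (j ∈ Z)), ?_, zs_zfun Z⟩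
    rw [mem_FreeS]
    intro j hjS
    rw [Finset.mem_powerset] at hZ
    have : j ∉ Z := fun hj => hjS (hZ hj)
    simp [this]

def Vfin (k ℓ : ℕ) : Finset (Fin k → Bool) :=
  univ.filter (fun u => k - ℓ ≤ wt u)

lemma mem_Vfin {u : Fin k → Bool} : u ∈ Vfin k ℓ ↔ k - ℓ ≤ wt u := by simp [Vfin]

lemma mem_Vfin_zct (hℓk : ℓ ≤ k) {u : Fin k → Bool} : u ∈ Vfin k ℓ ↔ zct u ≤ ℓ := by
  rw [mem_Vfin]
  have := wt_add_zct u
  omega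

lemma FreeS_subset_Vfin {S : Finset (Fin k)} (hS : S.card ≤ ℓ) (hℓk : ℓ ≤ k) :
    FreeS S ⊆ Vfin k ℓ := by
  intro u hu
  rw [mem_Vfin_zct k ℓ hℓk]
  rw [mem_FreeS] at hu
  have hsub : zs u ⊆ S := by
    intro j hj
    simp only [zs, Finset.mem_filter, Finset.mem_univ, true_and] at hj
    by_contra hjS
    rw [hu j hjS] at hj
    exact absurd hj (by simp)
  calc zct u = (zs u).card := rfl
    _ ≤ S.card := Finset.card_le_card hsub
    _ ≤ ℓ := hS

lemma card_fiber (i : ℕ) :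
    (univ.filter (fun u : Fin k → Bool => zct u = i)).card = k.choose i := by
  have hpc : (Finset.powersetCard i (univ : Finset (Fin k))).card = k.choose i := by
    rw [Finset.card_powersetCard, Finset.card_univ, Fintype.card_fin]
  rw [← hpc]
  · apply Finset.card_bij (fun u _ => zs u)
    · intro u hu
      rw [Finset.mem_powersetCard]
      simp only [Finset.mem_filter, Finset.mem_univ, true_and] at hu
      exact ⟨Finset.subset_univ _, by rw [card_zs, hu]⟩
    · intro a ha b hb h
      have := congrArg (fun Z => (fun j => !(decide (j ∈ Z)))) h
      simpa [zfun_zs] using this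
    · intro Z hZ
      rw [Finset.mem_powersetCard] at hZ
      refine ⟨fun j => !(decide (j ∈ Z)), ?_, zs_zfun Z⟩
      simp only [Finset.mem_filter, Finset.mem_univ, true_and]
      rw [← card_zs, zs_zfun]
      exact hZ.2
  -- card univ = k
  
lemma card_Vfin (hℓk : ℓ ≤ k) :
    (Vfin k ℓ).card = ∑ i ∈ Finset.range (ℓ + 1), k.choose i := by
  have h1 : Vfin k ℓ = (Finset.range (ℓ + 1)).biUnion
      (fun i => univ.filter (fun u : Fin k → Bool => zct u = i)) := by
    ext u
    simp only [Finset.mem_biUnion, Finset.mem_range, Finset.mem_filter, Finset.mem_univ,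
      true_and]
    rw [mem_Vfin_zct k ℓ hℓk]
    constructor
    · intro h
      exact ⟨zct u, by omega, rfl⟩
    · rintro ⟨i, hi, rfl⟩
      omega
  rw [h1, Finset.card_biUnion]
  · exact Finset.sum_congr rfl (fun i _ => card_fiber k i)
  · intro i _ j _ hij
    rw [Function.onFun_apply, Finset.disjoint_left]
    intro u hu hu'
    simp only [Finset.mem_filter] at hu hu'
    exact hij (hu.2 ▸ hu'.2)

noncomputable def innF (k ℓ : ℕ) (S : Finset (Fin k)) (u : Fin k → Bool) : ℝ :=
  if u ∈ FreeS S then sgn u * (1 / ((Vfin k ℓ).card : ℝ)) else 0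

noncomputable def outF (k ℓ : ℕ) (S : Finset (Fin k)) (u : Fin k → Bool) : ℝ :=
  if u ∈ FreeS S then 0
  else sgn u * (if k - ℓ ≤ wt u then 1 / ((Vfin k ℓ).card : ℝ) else 0)

def cmb {n k : ℕ} (A : Finset (Fin n)) (f : {i // i ∈ A} → Fin k → Bool)
    (g : {i // ¬ i ∈ A} → Fin k → Bool) : Fin n → Fin k → Bool :=
  fun i => if h : i ∈ A then f ⟨i, h⟩ else g ⟨i, h⟩

def psiF {n k : ℕ} (S : Finset (Fin k)) (A : Finset (Fin n))
    (C' : {i // i ∈ A} → {j // j ∈ S} → Bool) : {i // i ∈ A} → Fin k → Bool :=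
  fun i j => if h : j ∈ S then C' i ⟨j, h⟩ else true

lemma psiF_mem_FreeS {n k : ℕ} (S : Finset (Fin k)) (A : Finset (Fin n))
    (C' : {i // i ∈ A} → {j // j ∈ S} → Bool) (i : {i // i ∈ A}) :
    psiF S A C' i ∈ FreeS S := by
  rw [mem_FreeS]
  intro j hj
  simp [psiF, hj]

lemma inner_bound (n k ℓ : ℕ) (S : Finset (Fin k)) (hS : S.Nonempty)
    (hScard : S.card ≤ ℓ) (hℓk : ℓ ≤ k)
    (φ : Fin k → (Fin n → Fin k → Bool) → ℝ)
    (hb : ∀ j ∈ S, ∀ X, φ j X = 0 ∨ φ j X = 1)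
    (hind : ∀ j ∈ S, ∀ X Y, (∀ i, ∀ j', j' ≠ j → X i j' = Y i j') → φ j X = φ j Y)
    (A : Finset (Fin n)) (g : {i // ¬ i ∈ A} → Fin k → Bool) :
    |∑ f : {i // i ∈ A} → Fin k → Bool,
        (∏ i : {i // i ∈ A}, innF k ℓ S (f i)) * ∏ j ∈ S, φ j (cmb A f g)|
      ≤ (((2 : ℝ) ^ S.card - 2 / 2 ^ S.card) / ((Vfin k ℓ).card : ℝ)) ^ A.card := by
  classical
  set Nre : ℝ := ((Vfin k ℓ).card : ℝ) with hNre
  have hNpos : (0 : ℝ) < Nre := by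
    rw [hNre]
    have : (fun _ => true : Fin k → Bool) ∈ Vfin k ℓ := by
      rw [mem_Vfin]
      have : wt (fun _ => true : Fin k → Bool) = k := by
        unfold wt
        simp
      omega
    exact_mod_cast Finset.card_pos.2 ⟨_, this⟩
  -- 1. restrict the sum to FreeS-valued tuples
  have hvanish : ∀ f : {i // i ∈ A} → Fin k → Bool,
      f ∈ (univ : Finset _) → f ∉ Fintype.piFinset (fun _ => FreeS S) →
      (∏ i : {i // i ∈ A}, innF k ℓ S (f i)) * ∏ j ∈ S, φ j (cmb A f g) = 0 := by
    intro f _ hf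
    rw [Fintype.mem_piFinset] at hf
    push_neg at hf
    obtain ⟨i, hi⟩ := hf
    have : innF k ℓ S (f i) = 0 := if_neg hi
    rw [Finset.prod_eq_zero (Finset.mem_univ i) this, zero_mul]
  rw [← Finset.sum_subset (Finset.subset_univ (Fintype.piFinset (fun _ => FreeS S))) hvanish]
  -- 2. reindex by boolean matrices
  have hbij : ∑ f ∈ Fintype.piFinset (fun _ : {i // i ∈ A} => FreeS S),
        (∏ i : {i // i ∈ A}, innF k ℓ S (f i)) * ∏ j ∈ S, φ j (cmb A f g)
      = ∑ C' : {i // i ∈ A} → {j // j ∈ S} → Bool,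
          (1 / Nre) ^ A.card *
            ((∏ i : {i // i ∈ A},
              (if ∀ jj : {j // j ∈ S}, C' i jj = true then (-1 : ℝ) else 1)) *
            ∏ j ∈ S, φ j (cmb A (psiF S A C') g)) := by
    apply Finset.sum_nbij' (i := fun f => fun i jj => f i jj.1)
      (j := fun C' => psiF S A C')
    · intro f _
      exact Finset.mem_univ _
    · intro C' _
      rw [Fintype.mem_piFinset]
      intro i
      exact psiF_mem_FreeS S A C' i
    · intro f hf
      rw [Fintype.mem_piFinset] at hf
      funext i j
      by_cases h : j ∈ S
      · simp [psiF, h]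
      · have := mem_FreeS.1 (hf i) j h
        simp [psiF, h, this]
    · intro C' _
      funext i jj
      simp [psiF, jj.2]
    · intro f hf
      rw [Fintype.mem_piFinset] at hf
      have hpsi : psiF S A (fun i jj => f i jj.1) = f := by
        funext i j
        by_cases h : j ∈ S
        · simp [psiF, h]
        · have := mem_FreeS.1 (hf i) j h
          simp [psiF, h, this]
      rw [hpsi]
      have hinn : ∀ i : {i // i ∈ A}, innF k ℓ S (f i)
          = (if ∀ jj : {j // j ∈ S}, f i jj.1 = true then (-1 : ℝ) else 1) * (1 / Nre) := by
        intro i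
        rw [innF, if_pos (hf i)]
        congr 1
        unfold sgn
        have hiff : (∀ j, f i j = true) ↔ (∀ jj : {j // j ∈ S}, f i jj.1 = true) := by
          constructor
          · intro h jj
            exact h jj.1
          · intro h j
            by_cases hj : j ∈ S
            · exact h ⟨j, hj⟩
            · exact mem_FreeS.1 (hf i) j hj
        simp only [hiff]
      rw [Finset.prod_congr rfl (fun i _ => hinn i), Finset.prod_mul_distrib,
        Finset.prod_const, Finset.card_univ, Fintype.card_coe]
      ring
  rw [hbij]
  rw [← Finset.mul_sum, abs_mul, abs_of_nonneg (pow_nonneg (by positivity) _)]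
  -- 3. transpose and apply the core bound
  have hSne : Nonempty {j // j ∈ S} := by
    obtain ⟨j, hj⟩ := hS
    exact ⟨⟨j, hj⟩⟩
  set φcore : {j // j ∈ S} → ({j // j ∈ S} → {i // i ∈ A} → Bool) → ℝ :=
    fun jj C => φ jj.1 (cmb A (psiF S A (fun i jj' => C jj' i)) g) with hφcore
  have htrans : ∑ C' : {i // i ∈ A} → {j // j ∈ S} → Bool,
        ((∏ i : {i // i ∈ A},
          (if ∀ jj : {j // j ∈ S}, C' i jj = true then (-1 : ℝ) else 1)) *
        ∏ j ∈ S, φ j (cmb A (psiF S A C') g))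
      = ∑ C : {j // j ∈ S} → {i // i ∈ A} → Bool,
          msign C * ∏ jj : {j // j ∈ S}, φcore jj C := by
    refine (Fintype.sum_equiv
      (Equiv.piComm (fun (_ : {j // j ∈ S}) (_ : {i // i ∈ A}) => Bool))
      (fun C => msign C * ∏ jj : {j // j ∈ S}, φcore jj C)
      (fun C' => (∏ i : {i // i ∈ A},
          (if ∀ jj : {j // j ∈ S}, C' i jj = true then (-1 : ℝ) else 1)) *
        ∏ j ∈ S, φ j (cmb A (psiF S A C') g))
      (fun C => ?_)).symm
    show msign C * ∏ jj : {j // j ∈ S}, φcore jj C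
      = msign C * ∏ j ∈ S, φ j (cmb A (psiF S A (fun i jj' => C jj' i)) g)
    exact congrArg (msign C * ·)
      (Finset.prod_coe_sort S (fun j => φ j (cmb A (psiF S A (fun i jj' => C jj' i)) g)))
  rw [htrans]
  have hcore := core_bound φcore
    (fun jj C => hb jj.1 jj.2 _)
    (by
      intro jj C C' hCC
      apply hind jj.1 jj.2
      intro i j' hj'
      by_cases hiA : i ∈ A
      · by_cases hjS : j' ∈ S
        · have hne : (⟨j', hjS⟩ : {j // j ∈ S}) ≠ jj := by
            intro h
            apply hj'
            rw [← h]
          have := hCC ⟨j', hjS⟩ hne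
          simp [cmb, psiF, hiA, hjS, this]
        · simp [cmb, psiF, hiA, hjS]
      · simp [cmb, hiA])
  rw [Fintype.card_coe, Fintype.card_coe] at hcore
  calc (1 / Nre) ^ A.card * |∑ C : {j // j ∈ S} → {i // i ∈ A} → Bool,
          msign C * ∏ jj : {j // j ∈ S}, φcore jj C|
      ≤ (1 / Nre) ^ A.card * ((2 : ℝ) ^ S.card - 2 / 2 ^ S.card) ^ A.card :=
        mul_le_mul_of_nonneg_left hcore (pow_nonneg (by positivity) _)
    _ = (((2 : ℝ) ^ S.card - 2 / 2 ^ S.card) / Nre) ^ A.card := by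
        rw [← mul_pow]
        congr 1
        ring

lemma Vfin_card_pos : 0 < (Vfin k ℓ).card := by
  apply Finset.card_pos.2
  refine ⟨fun _ => true, ?_⟩
  rw [mem_Vfin]
  have : wt (fun _ => true : Fin k → Bool) = k := by
    unfold wt
    simp
  omega

lemma abs_outF (S : Finset (Fin k)) (u : Fin k → Bool) :
    |outF k ℓ S u| = if u ∈ FreeS S then 0
      else (if k - ℓ ≤ wt u then 1 / ((Vfin k ℓ).card : ℝ) else 0) := by
  unfold outF
  by_cases h : u ∈ FreeS S
  · rw [if_pos h, if_pos h, abs_zero]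
  · rw [if_neg h, if_neg h, abs_mul]
    have h1 : |sgn u| = 1 := by
      unfold sgn
      split_ifs <;> norm_num
    have h2 : (0:ℝ) ≤ (if k - ℓ ≤ wt u then 1 / ((Vfin k ℓ).card : ℝ) else 0) := by
      split_ifs
      · positivity
      · exact le_refl 0
    rw [h1, one_mul, abs_of_nonneg h2]

lemma sum_abs_outF (S : Finset (Fin k)) (hScard : S.card ≤ ℓ) (hℓk : ℓ ≤ k) :
    ∑ u : Fin k → Bool, |outF k ℓ S u|
      = (((Vfin k ℓ).card : ℝ) - 2 ^ S.card) / ((Vfin k ℓ).card : ℝ) := by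
  simp only [abs_outF k ℓ S]
  rw [Finset.sum_ite, Finset.sum_const_zero, zero_add]
  rw [Finset.sum_ite, Finset.sum_const_zero, add_zero, Finset.sum_const, nsmul_eq_mul]
  have hset : ((univ.filter (fun u : Fin k → Bool => ¬ u ∈ FreeS S)).filter
      (fun u => k - ℓ ≤ wt u)) = Vfin k ℓ \ FreeS S := by
    ext u
    simp only [Finset.mem_filter, Finset.mem_univ, true_and, Finset.mem_sdiff, mem_Vfin]
    tauto
  rw [hset, Finset.card_sdiff_of_subset (FreeS_subset_Vfin k ℓ hScard hℓk), card_FreeS]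
  have h2s : 2 ^ S.card ≤ (Vfin k ℓ).card := by
    rw [← card_FreeS S]
    exact Finset.card_le_card (FreeS_subset_Vfin k ℓ hScard hℓk)
  rw [Nat.cast_sub h2s]
  push_cast
  ring

lemma termA_bound (n : ℕ) (S : Finset (Fin k)) (hS : S.Nonempty)
    (hScard : S.card ≤ ℓ) (hℓk : ℓ ≤ k)
    (φ : Fin k → (Fin n → Fin k → Bool) → ℝ)
    (hb : ∀ j ∈ S, ∀ X, φ j X = 0 ∨ φ j X = 1)
    (hind : ∀ j ∈ S, ∀ X Y, (∀ i, ∀ j', j' ≠ j → X i j' = Y i j') → φ j X = φ j Y)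
    (A : Finset (Fin n)) :
    |∑ X : Fin n → Fin k → Bool,
        (∏ i ∈ A, innF k ℓ S (X i)) * (∏ i ∈ univ \ A, outF k ℓ S (X i))
          * ∏ j ∈ S, φ j X|
      ≤ (((2 : ℝ) ^ S.card - 2 / 2 ^ S.card) / ((Vfin k ℓ).card : ℝ)) ^ A.card
        * ((((Vfin k ℓ).card : ℝ) - 2 ^ S.card) / ((Vfin k ℓ).card : ℝ)) ^ (univ \ A).card := by
  classical
  set e := Equiv.piEquivPiSubtypeProd (fun i : Fin n => i ∈ A) (fun _ => Fin k → Bool)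
    with hedef
  set F : (Fin n → Fin k → Bool) → ℝ := fun X =>
    (∏ i ∈ A, innF k ℓ S (X i)) * (∏ i ∈ univ \ A, outF k ℓ S (X i))
      * ∏ j ∈ S, φ j X with hFdef
  have hcmb : ∀ (f : {i // i ∈ A} → Fin k → Bool) (g : {i // ¬ i ∈ A} → Fin k → Bool),
      e.symm (f, g) = cmb A f g := by
    intro f g
    funext i
    rw [hedef, Equiv.piEquivPiSubtypeProd_symm_apply]
    rfl
  have htrsum : ∑ X : Fin n → Fin k → Bool, F X
      = ∑ g : {i // ¬ i ∈ A} → Fin k → Bool,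
          (∏ i : {i // ¬ i ∈ A}, outF k ℓ S (g i)) *
            ∑ f : {i // i ∈ A} → Fin k → Bool,
              (∏ i : {i // i ∈ A}, innF k ℓ S (f i)) * ∏ j ∈ S, φ j (cmb A f g) := by
    calc ∑ X : Fin n → Fin k → Bool, F X
        = ∑ p : ({i // i ∈ A} → Fin k → Bool) × ({i // ¬ i ∈ A} → Fin k → Bool),
            F (e.symm p) := (Equiv.sum_comp e.symm F).symm
      _ = ∑ f : {i // i ∈ A} → Fin k → Bool, ∑ g : {i // ¬ i ∈ A} → Fin k → Bool,
            F (e.symm (f, g)) := Fintype.sum_prod_type _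
      _ = ∑ g : {i // ¬ i ∈ A} → Fin k → Bool, ∑ f : {i // i ∈ A} → Fin k → Bool,
            F (cmb A f g) := by
          simp only [hcmb]
          exact Finset.sum_comm
      _ = ∑ g : {i // ¬ i ∈ A} → Fin k → Bool,
            (∏ i : {i // ¬ i ∈ A}, outF k ℓ S (g i)) *
              ∑ f : {i // i ∈ A} → Fin k → Bool,
                (∏ i : {i // i ∈ A}, innF k ℓ S (f i)) * ∏ j ∈ S, φ j (cmb A f g) := by
          refine Finset.sum_congr rfl (fun g _ => ?_)
          rw [Finset.mul_sum]
          refine Finset.sum_congr rfl (fun f _ => ?_)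
          rw [hFdef]
          beta_reduce
          have hA : ∏ i ∈ A, innF k ℓ S ((cmb A f g) i)
              = ∏ i : {i // i ∈ A}, innF k ℓ S (f i) := by
            rw [← Finset.prod_coe_sort A (fun i => innF k ℓ S ((cmb A f g) i))]
            refine Finset.prod_congr rfl (fun i _ => ?_)
            congr 1
            simp [cmb]
          have hB : ∏ i ∈ univ \ A, outF k ℓ S ((cmb A f g) i)
              = ∏ i : {i // ¬ i ∈ A}, outF k ℓ S (g i) := by
            rw [Finset.prod_subtype (univ \ A) (p := fun i => ¬ i ∈ A) (by simp)
              (fun i => outF k ℓ S ((cmb A f g) i))]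
            refine Finset.prod_congr rfl (fun i _ => ?_)
            congr 1
            simp [cmb, i.2]
          rw [hA, hB]
          ring
  rw [htrsum]
  have hNpos : (0 : ℝ) < ((Vfin k ℓ).card : ℝ) := by
    exact_mod_cast Vfin_card_pos k ℓ
  have habound : (0:ℝ) ≤ (((2 : ℝ) ^ S.card - 2 / 2 ^ S.card) / ((Vfin k ℓ).card : ℝ)) ^ A.card := by
    have hs1 : 1 ≤ S.card := Finset.Nonempty.card_pos hS
    have h2s : (2:ℝ) ≤ 2 ^ S.card := by
      calc (2:ℝ) = 2 ^ 1 := (pow_one 2).symm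
        _ ≤ 2 ^ S.card := pow_le_pow_right₀ (by norm_num) hs1
    have : (0:ℝ) ≤ 2 ^ S.card - 2 / 2 ^ S.card := by
      have h1 : (2:ℝ) / 2 ^ S.card ≤ 1 := by
        rw [div_le_one (by positivity)]
        exact h2s
      linarith
    positivity
  calc |∑ g : {i // ¬ i ∈ A} → Fin k → Bool,
          (∏ i : {i // ¬ i ∈ A}, outF k ℓ S (g i)) *
            ∑ f : {i // i ∈ A} → Fin k → Bool,
              (∏ i : {i // i ∈ A}, innF k ℓ S (f i)) * ∏ j ∈ S, φ j (cmb A f g)|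
      ≤ ∑ g : {i // ¬ i ∈ A} → Fin k → Bool,
          |(∏ i : {i // ¬ i ∈ A}, outF k ℓ S (g i)) *
            ∑ f : {i // i ∈ A} → Fin k → Bool,
              (∏ i : {i // i ∈ A}, innF k ℓ S (f i)) * ∏ j ∈ S, φ j (cmb A f g)| :=
        Finset.abs_sum_le_sum_abs _ _
    _ ≤ ∑ g : {i // ¬ i ∈ A} → Fin k → Bool,
          (∏ i : {i // ¬ i ∈ A}, |outF k ℓ S (g i)|) *
            ((((2 : ℝ) ^ S.card - 2 / 2 ^ S.card) / ((Vfin k ℓ).card : ℝ)) ^ A.card) := by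
        refine Finset.sum_le_sum (fun g _ => ?_)
        rw [abs_mul, Finset.abs_prod]
        exact mul_le_mul_of_nonneg_left
          (inner_bound n k ℓ S hS hScard hℓk φ hb hind A g)
          (Finset.prod_nonneg (fun i _ => abs_nonneg _))
    _ = ((((2 : ℝ) ^ S.card - 2 / 2 ^ S.card) / ((Vfin k ℓ).card : ℝ)) ^ A.card) *
          ∑ g : {i // ¬ i ∈ A} → Fin k → Bool,
            ∏ i : {i // ¬ i ∈ A}, |outF k ℓ S (g i)| := by
        rw [Finset.mul_sum]
        exact Finset.sum_congr rfl (fun g _ => mul_comm _ _)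
    _ = ((((2 : ℝ) ^ S.card - 2 / 2 ^ S.card) / ((Vfin k ℓ).card : ℝ)) ^ A.card) *
          ((((Vfin k ℓ).card : ℝ) - 2 ^ S.card) / ((Vfin k ℓ).card : ℝ)) ^ (univ \ A).card := by
        congr 1
        rw [sum_fun_prod (fun u : Fin k → Bool => |outF k ℓ S u|)]
        rw [sum_abs_outF k ℓ S hScard hℓk]
        congr 1
        rw [Fintype.card_subtype]
        congr 1
        ext i
        simp

lemma innF_add_outF (S : Finset (Fin k)) (hScard : S.card ≤ ℓ) (hℓk : ℓ ≤ k)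
    (u : Fin k → Bool) :
    sgn u * (if k - ℓ ≤ wt u then 1 / ((Vfin k ℓ).card : ℝ) else 0)
      = innF k ℓ S u + outF k ℓ S u := by
  unfold innF outF
  by_cases h : u ∈ FreeS S
  · rw [if_pos h, if_pos h]
    have hV : k - ℓ ≤ wt u := (mem_Vfin k ℓ).1 (FreeS_subset_Vfin k ℓ hScard hℓk h)
    rw [if_pos hV, add_zero]
  · rw [if_neg h, if_neg h, zero_add]

lemma main_bound (n : ℕ) (hℓ : 0 < ℓ) (hℓk : ℓ ≤ k) (S : Finset (Fin k))
    (hS : S.Nonempty) (hScard : S.card ≤ ℓ)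
    (φ : Fin k → (Fin n → Fin k → Bool) → ℝ)
    (hb : ∀ j ∈ S, ∀ X, φ j X = 0 ∨ φ j X = 1)
    (hind : ∀ j ∈ S, ∀ X Y, (∀ i, ∀ j', j' ≠ j → X i j' = Y i j') → φ j X = φ j Y) :
    |∑ X : Fin n → Fin k → Bool,
        (if GIP n k X then (-1 : ℝ) else 1) * upsilon n k ℓ X * ∏ j ∈ S, φ j X|
      ≤ (1 - 1 / ((2 : ℝ) ^ (ℓ - 1) * ((Vfin k ℓ).card : ℝ))) ^ n := by
  classical
  set Nre : ℝ := ((Vfin k ℓ).card : ℝ) with hNre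
  have hNpos : (0 : ℝ) < Nre := by
    rw [hNre]; exact_mod_cast Vfin_card_pos k ℓ
  set a : ℝ := ((2 : ℝ) ^ S.card - 2 / 2 ^ S.card) / Nre with hadef
  set b : ℝ := (Nre - 2 ^ S.card) / Nre with hbdef
  have hpoint : ∀ X : Fin n → Fin k → Bool,
      (if GIP n k X then (-1 : ℝ) else 1) * upsilon n k ℓ X
        = ∏ i : Fin n, (innF k ℓ S (X i) + outF k ℓ S (X i)) := by
    intro X
    rw [gip_sign k n X]
    unfold upsilon
    rw [← Finset.prod_mul_distrib]
    refine Finset.prod_congr rfl (fun i _ => ?_)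
    rw [← innF_add_outF k ℓ S hScard hℓk (X i)]
    rfl
  have hexpand : ∑ X : Fin n → Fin k → Bool,
      (if GIP n k X then (-1 : ℝ) else 1) * upsilon n k ℓ X * ∏ j ∈ S, φ j X
      = ∑ A ∈ (univ : Finset (Fin n)).powerset, ∑ X : Fin n → Fin k → Bool,
          (∏ i ∈ A, innF k ℓ S (X i)) * (∏ i ∈ univ \ A, outF k ℓ S (X i))
            * ∏ j ∈ S, φ j X := by
    rw [Finset.sum_comm]
    refine Finset.sum_congr rfl (fun X _ => ?_)
    rw [hpoint X, Finset.prod_add, Finset.sum_mul]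
  rw [hexpand]
  have hs1 : 1 ≤ S.card := Finset.Nonempty.card_pos hS
  have h2s : (2:ℝ) ≤ 2 ^ S.card := by
    calc (2:ℝ) = 2 ^ 1 := (pow_one 2).symm
      _ ≤ 2 ^ S.card := pow_le_pow_right₀ (by norm_num) hs1
  have h2sN : (2:ℝ) ^ S.card ≤ Nre := by
    rw [hNre]
    have h := Finset.card_le_card (FreeS_subset_Vfin k ℓ hScard hℓk)
    rw [card_FreeS] at h
    exact_mod_cast h
  have ha0 : 0 ≤ a := by
    have h1 : (2:ℝ) / 2 ^ S.card ≤ 1 := by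
      rw [div_le_one (by positivity)]
      exact h2s
    have : (0:ℝ) ≤ 2 ^ S.card - 2 / 2 ^ S.card := by linarith
    rw [hadef]
    positivity
  have hb0 : 0 ≤ b := by
    have : (0:ℝ) ≤ Nre - 2 ^ S.card := by linarith
    rw [hbdef]
    positivity
  calc |∑ A ∈ (univ : Finset (Fin n)).powerset, ∑ X : Fin n → Fin k → Bool,
          (∏ i ∈ A, innF k ℓ S (X i)) * (∏ i ∈ univ \ A, outF k ℓ S (X i))
            * ∏ j ∈ S, φ j X|
      ≤ ∑ A ∈ (univ : Finset (Fin n)).powerset, |∑ X : Fin n → Fin k → Bool,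
          (∏ i ∈ A, innF k ℓ S (X i)) * (∏ i ∈ univ \ A, outF k ℓ S (X i))
            * ∏ j ∈ S, φ j X| := Finset.abs_sum_le_sum_abs _ _
    _ ≤ ∑ A ∈ (univ : Finset (Fin n)).powerset, a ^ A.card * b ^ (univ \ A).card :=
        Finset.sum_le_sum (fun A _ =>
          termA_bound k ℓ n S hS hScard hℓk φ hb hind A)
    _ = (a + b) ^ n := by
        have h := Finset.prod_add (fun _ : Fin n => a) (fun _ : Fin n => b) univ
        rw [Finset.prod_const, Finset.card_univ, Fintype.card_fin] at h
        have h2 : ∑ A ∈ (univ : Finset (Fin n)).powerset, a ^ A.card * b ^ (univ \ A).card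
            = ∑ t ∈ (univ : Finset (Fin n)).powerset,
                (∏ _i ∈ t, a) * ∏ _i ∈ univ \ t, b :=
          Finset.sum_congr rfl (fun A _ => by rw [Finset.prod_const, Finset.prod_const])
        rw [h2, ← h]
    _ ≤ (1 - 1 / ((2 : ℝ) ^ (ℓ - 1) * Nre)) ^ n := by
        apply pow_le_pow_left₀ (by linarith)
        have hab : a + b = 1 - (2 / 2 ^ S.card) / Nre := by
          rw [hadef, hbdef]
          field_simp
          ring
        rw [hab]
        have hkey : 1 / ((2 : ℝ) ^ (ℓ - 1) * Nre) ≤ (2 / 2 ^ S.card) / Nre := by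
          rw [div_div, div_le_div_iff₀ (by positivity) (by positivity)]
          have h2ℓ : (2:ℝ) * 2 ^ (ℓ - 1) = 2 ^ ℓ := by
            rw [← pow_succ']
            congr 1
            omega
          have hsl : (2:ℝ) ^ S.card ≤ 2 ^ ℓ := pow_le_pow_right₀ (by norm_num) hScard
          nlinarith [hNpos.le, pow_pos (show (0:ℝ) < 2 by norm_num) S.card]
        linarith
  
lemma sum_le_of_eq_swap : True := trivial

end App

theorem final_helper (n k ℓ : ℕ) (hn : 0 < n) (hk : 0 < k) (hℓ : 0 < ℓ) (hℓk : ℓ ≤ k)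
    (S : Finset (Fin k)) (hcard : S.card ≤ ℓ)
    (χ : (Fin n → Fin k → Bool) → ℝ)
    (φ : Fin k → (Fin n → Fin k → Bool) → ℝ)
    (hb : ∀ j ∈ S, ∀ X, φ j X = 0 ∨ φ j X = 1)
    (hind : ∀ j ∈ S, ∀ X Y, (∀ i, ∀ j', j' ≠ j → X i j' = Y i j') → φ j X = φ j Y)
    (hχ : ∀ X, χ X = ∏ j ∈ S, φ j X) :
    |∑ X : Fin n → Fin k → Bool,
        (if GIP n k X then (-1 : ℝ) else 1) * upsilon n k ℓ X * χ X|
      ≤ (1 - 1 / ((2 : ℝ) ^ (ℓ - 1) * ((Vfin k ℓ).card : ℝ))) ^ n := by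
  classical
  rcases S.eq_empty_or_nonempty with rfl | hS
  · -- S empty : replace by a singleton with trivial φ
    set S' : Finset (Fin k) := {⟨0, hk⟩} with hS'
    set φ' : Fin k → (Fin n → Fin k → Bool) → ℝ := fun _ _ => 1 with hφ'
    have hre : ∀ X, χ X = ∏ j ∈ S', φ' j X := by
      intro X
      rw [hχ X]
      simp [hφ']
    have h := main_bound k ℓ n hℓ hℓk S' (Finset.singleton_nonempty _)
      (by rw [hS', Finset.card_singleton]; omega) φ'
      (fun j _ X => Or.inr rfl) (fun j _ X Y _ => rfl)
    have heq : ∑ X : Fin n → Fin k → Bool,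
        (if GIP n k X then (-1 : ℝ) else 1) * upsilon n k ℓ X * χ X
        = ∑ X : Fin n → Fin k → Bool,
            (if GIP n k X then (-1 : ℝ) else 1) * upsilon n k ℓ X * ∏ j ∈ S', φ' j X :=
      Finset.sum_congr rfl (fun X _ => by rw [hre X])
    rw [heq]
    exact h
  · have heq : ∑ X : Fin n → Fin k → Bool,
        (if GIP n k X then (-1 : ℝ) else 1) * upsilon n k ℓ X * χ X
        = ∑ X : Fin n → Fin k → Bool,
            (if GIP n k X then (-1 : ℝ) else 1) * upsilon n k ℓ X * ∏ j ∈ S, φ j X :=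
      Finset.sum_congr rfl (fun X _ => by rw [hχ X])
    rw [heq]
    exact main_bound k ℓ n hℓ hℓk S hS hcard φ hb hind

end Stmt7

/-- discrepancy bound for generalized inner product. -/
theorem stmt_7 (n k ℓ : ℕ) (hn : 0 < n) (hk : 0 < k) (hℓ : 0 < ℓ) (hℓk : ℓ ≤ k) :
    discL n k ℓ (GIP n k) (upsilon n k ℓ) ≤
      (1 - 1 / ((2 : ℝ) ^ (ℓ - 1) *
        ∑ i ∈ Finset.range (ℓ + 1), (k.choose i : ℝ))) ^ n := by
  classical
  have hNt : ((Stmt7.Vfin k ℓ).card : ℝ) = ∑ i ∈ Finset.range (ℓ + 1), (k.choose i : ℝ) := by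
    rw [Stmt7.card_Vfin k ℓ hℓk]
    push_cast
    rfl
  have hNt2 : (2 : ℝ) ≤ ∑ i ∈ Finset.range (ℓ + 1), (k.choose i : ℝ) := by
    have hnat : 2 ≤ ∑ i ∈ Finset.range (ℓ + 1), k.choose i := by
      have h01 : ({0, 1} : Finset ℕ) ⊆ Finset.range (ℓ + 1) := by
        intro x hx
        simp only [Finset.mem_insert, Finset.mem_singleton] at hx
        rw [Finset.mem_range]
        rcases hx with rfl | rfl <;> omega
      have hsub := Finset.sum_le_sum_of_subset (f := fun i => k.choose i) h01
      rw [Finset.sum_pair (by norm_num : (0:ℕ) ≠ 1)] at hsub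
      simp only [Nat.choose_zero_right, Nat.choose_one_right] at hsub
      omega
    calc (2:ℝ) = ((2:ℕ) : ℝ) := by norm_num
      _ ≤ _ := by exact_mod_cast hnat
  apply Real.sSup_le
  · rintro t ⟨S, χ, hcard, ⟨φ, hb, hind, hχ⟩, rfl⟩
    have h := Stmt7.final_helper n k ℓ hn hk hℓ hℓk S hcard χ φ hb hind hχ
    rwa [hNt] at h
  · apply pow_nonneg
    have h2l : (1:ℝ) ≤ 2 ^ (ℓ - 1) := one_le_pow₀ (by norm_num)
    have hpos : (0:ℝ) < (2 : ℝ) ^ (ℓ - 1) * ∑ i ∈ Finset.range (ℓ + 1), (k.choose i : ℝ) := by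
      nlinarith
    have : 1 / ((2 : ℝ) ^ (ℓ - 1) * ∑ i ∈ Finset.range (ℓ + 1), (k.choose i : ℝ)) ≤ 1 := by
      rw [div_le_one hpos]
      nlinarith
    linarith
end

section
/- Let n and k be positive integers. For every cylinder intersection χ : {0,1}^{n×k} → {0,1}, | (1/2^{nk}) Σ_{X ∈ {0,1}^{n×k}} e( (1/3) Σ_{i=1}^n (X_{i,1} ⊕ X_{i,2} ⊕ ⋯ ⊕ X_{i,k}) ) · χ(X) | < exp(−n/4^k), where e(t) = exp(2πit) with i the imaginary unit, and |·| denotes the complex absolute value. -/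
open Finset

/-- `e(t) = exp(2πit)`. -/
noncomputable def eFn (t : ℂ) : ℂ := Complex.exp (2 * Real.pi * Complex.I * t)

/-- The XOR `X_{i,1} ⊕ ⋯ ⊕ X_{i,k}` of the entries of row `i`, as `0` or `1`. -/
def rowXor {k : ℕ} (u : Fin k → Bool) : ℕ :=
  (Finset.univ.filter (fun j => u j = true)).card % 2

namespace Stmt13

variable {n k : ℕ}

abbrev Ω (n k : ℕ) := Fin n → Fin k → Bool
abbrev Col (n : ℕ) := Fin n → Bool

/-- replace column `a` of `X` by `u`. -/
def upd (X : Ω n k) (a : Fin k) (u : Col n) : Ω n k := fun i j => if j = a then u i else X i j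

/-- on columns in `T` use `Y`, elsewhere `X`. -/
def sel (T : Finset (Fin k)) (X Y : Ω n k) : Ω n k := fun i j => if j ∈ T then Y i j else X i j

/-- conjugate iff `m` is odd. -/
noncomputable def cc (m : ℕ) (z : ℂ) : ℂ := if m % 2 = 0 then z else (starRingEnd ℂ) z

noncomputable def B (S : Finset (Fin k)) (f : Ω n k → ℂ) : ℂ :=
  ∑ X : Ω n k, ∑ Y : Ω n k, ∏ T ∈ S.powerset, cc T.card (f (sel T X Y))

noncomputable def f2 (a : Fin k) (u v : Col n) (f : Ω n k → ℂ) (X : Ω n k) : ℂ :=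
  f (upd X a u) * (starRingEnd ℂ) (f (upd X a v))

lemma cc_succ (m : ℕ) (z : ℂ) : cc (m+1) z = (starRingEnd ℂ) (cc m z) := by
  rcases Nat.even_or_odd m with h | h
  · simp [cc, Nat.even_iff.mp h, Nat.succ_mod_two_eq_one_iff.mpr (Nat.even_iff.mp h)]
  · simp [cc, Nat.odd_iff.mp h, Nat.succ_mod_two_eq_zero_iff.mpr (Nat.odd_iff.mp h)]

lemma cc_mul_conj (m : ℕ) (z w : ℂ) :
    cc m (z * (starRingEnd ℂ) w) = cc m z * (starRingEnd ℂ) (cc m w) := by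
  rcases Nat.even_or_odd m with h | h
  · simp [cc, Nat.even_iff.mp h]
  · simp [cc, Nat.odd_iff.mp h, mul_comm]

lemma norm_cc (m : ℕ) (z : ℂ) : ‖cc m z‖ = ‖z‖ := by
  unfold cc; split <;> simp

@[simp] lemma upd_apply_self (X : Ω n k) (a : Fin k) (u : Col n) (i : Fin n) :
    upd X a u i a = u i := by simp [upd]

lemma upd_upd (X : Ω n k) (a : Fin k) (u v : Col n) : upd (upd X a u) a v = upd X a v := by
  funext i j; unfold upd; by_cases h : j = a <;> simp [h]

lemma upd_col_self (X : Ω n k) (a : Fin k) : upd X a (fun i => X i a) = X := by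
  funext i j; simp [upd]; intro h; simp [h]

lemma sel_empty (X Y : Ω n k) : sel ∅ X Y = X := by funext i j; simp [sel]

lemma sel_insert {T : Finset (Fin k)} {a : Fin k} (ha : a ∉ T) (X Y : Ω n k) :
    sel (insert a T) X Y = upd (sel T X Y) a (fun i => Y i a) := by
  funext i j
  by_cases h : j = a
  · subst h; simp [sel, upd, ha]
  · simp [sel, upd, h]

lemma upd_sel_notmem {T : Finset (Fin k)} {a : Fin k} (ha : a ∉ T) (X Y : Ω n k) :
    upd (sel T X Y) a (fun i => X i a) = sel T X Y := by
  funext i j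
  by_cases h : j = a
  · subst h; simp [sel, upd, ha]
  · simp [upd, h]

lemma upd_sel_left {T : Finset (Fin k)} {a : Fin k} (ha : a ∉ T) (X Y : Ω n k)
    (u w : Col n) : upd (sel T (upd X a u) Y) a w = upd (sel T X Y) a w := by
  funext i j
  by_cases h : j = a
  · subst h; simp [upd]
  · by_cases hT : j ∈ T
    · simp [sel, upd, h, hT]
    · have hja : ¬ (j = a) := h
      simp [sel, upd, hT, hja]

lemma upd_sel_right {T : Finset (Fin k)} {a : Fin k} (ha : a ∉ T) (X Y : Ω n k)
    (v w : Col n) : upd (sel T X (upd Y a v)) a w = upd (sel T X Y) a w := by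
  funext i j
  by_cases h : j = a
  · subst h; simp [upd]
  · by_cases hT : j ∈ T
    · have : j ∈ T → ¬ (j = a) := fun _ => h
      simp [sel, upd, hT, h]
    · simp [sel, upd, hT, h]

/-- resampling: averaging over a fresh column `a` changes nothing. -/
def resample (a : Fin k) : (Ω n k × Col n) ≃ (Ω n k × Col n) where
  toFun := fun p => (upd p.1 a p.2, fun i => p.1 i a)
  invFun := fun p => (upd p.1 a p.2, fun i => p.1 i a)
  left_inv := by rintro ⟨X, u⟩; simp [upd_upd, upd_col_self]
  right_inv := by rintro ⟨X, u⟩; simp [upd_upd, upd_col_self]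

/-- resampling: averaging over a fresh column `a` changes nothing. -/
lemma sum_upd (a : Fin k) (h : Ω n k → ℂ) :
    ∑ X : Ω n k, ∑ u : Col n, h (upd X a u) = (2^n : ℂ) * ∑ X : Ω n k, h X := by
  classical
  have := Equiv.sum_comp (resample a) (fun p : Ω n k × Col n => h p.1)
  calc ∑ X : Ω n k, ∑ u : Col n, h (upd X a u)
      = ∑ p : Ω n k × Col n, h ((resample a p).1) := by
        rw [Fintype.sum_prod_type]; rfl
    _ = ∑ p : Ω n k × Col n, h p.1 := this
    _ = (2^n : ℂ) * ∑ X : Ω n k, h X := by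
        rw [Fintype.sum_prod_type]
        simp [Finset.sum_const, Finset.card_univ]
        rw [← Finset.mul_sum]


noncomputable def gfun (a : Fin k) (S' : Finset (Fin k)) (f : Ω n k → ℂ) (X Y : Ω n k)
    (w : Col n) : ℂ :=
  ∏ T ∈ S'.powerset, cc T.card (f (upd (sel T X Y) a w))

variable {a : Fin k} {S' : Finset (Fin k)}

lemma gfun_upd_left (ha : a ∉ S') (f : Ω n k → ℂ) (X Y : Ω n k) (u w : Col n) :
    gfun a S' f (upd X a u) Y w = gfun a S' f X Y w := by
  unfold gfun
  refine Finset.prod_congr rfl fun T hT => ?_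
  have haT : a ∉ T := fun h => ha (Finset.mem_powerset.mp hT h)
  rw [upd_sel_left haT]

lemma gfun_upd_right (ha : a ∉ S') (f : Ω n k → ℂ) (X Y : Ω n k) (v w : Col n) :
    gfun a S' f X (upd Y a v) w = gfun a S' f X Y w := by
  unfold gfun
  refine Finset.prod_congr rfl fun T hT => ?_
  have haT : a ∉ T := fun h => ha (Finset.mem_powerset.mp hT h)
  rw [upd_sel_right haT]

/-- Expansion of `B (insert a S') f` pairing subsets with/without `a`. -/
lemma B_insert_pair (ha : a ∉ S') (f : Ω n k → ℂ) :
    B (insert a S') f = ∑ X : Ω n k, ∑ Y : Ω n k,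
      gfun a S' f X Y (fun i => X i a) *
        (starRingEnd ℂ) (gfun a S' f X Y (fun i => Y i a)) := by
  unfold B
  refine Finset.sum_congr rfl fun X _ => Finset.sum_congr rfl fun Y _ => ?_
  rw [Finset.prod_powerset_insert ha]
  congr 1
  · refine Finset.prod_congr rfl fun T hT => ?_
    have haT : a ∉ T := fun h => ha (Finset.mem_powerset.mp hT h)
    rw [upd_sel_notmem haT]
  · rw [gfun, map_prod]
    refine Finset.prod_congr rfl fun T hT => ?_
    have haT : a ∉ T := fun h => ha (Finset.mem_powerset.mp hT h)
    rw [Finset.card_insert_of_notMem haT, sel_insert haT, cc_succ]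

/-- `B S'` applied to the doubled function, in terms of `gfun`. -/
lemma B_f2 (f : Ω n k → ℂ) (u v : Col n) :
    B S' (f2 a u v f) = ∑ X : Ω n k, ∑ Y : Ω n k,
      gfun a S' f X Y u * (starRingEnd ℂ) (gfun a S' f X Y v) := by
  unfold B
  refine Finset.sum_congr rfl fun X _ => Finset.sum_congr rfl fun Y _ => ?_
  rw [gfun, gfun, map_prod, ← Finset.prod_mul_distrib]
  refine Finset.prod_congr rfl fun T _ => ?_
  simp only [f2]
  exact cc_mul_conj _ _ _

@[simp] lemma upd_col (X : Ω n k) (a : Fin k) (u : Col n) :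
    (fun i => upd X a u i a) = u := by funext i; simp

/-- Master expansion of `B (insert a S') f`. -/
lemma B_insert_expand (ha : a ∉ S') (f : Ω n k → ℂ) :
    (2^n : ℂ) * ((2^n : ℂ) * B (insert a S') f) =
      ∑ X : Ω n k, ∑ Y : Ω n k,
        (∑ u : Col n, gfun a S' f X Y u) *
          (starRingEnd ℂ) (∑ v : Col n, gfun a S' f X Y v) := by
  have step1 : (2^n : ℂ) * B (insert a S') f =
      ∑ X : Ω n k, ∑ Y : Ω n k,
        (∑ u : Col n, gfun a S' f X Y u) *
          (starRingEnd ℂ) (gfun a S' f X Y (fun i => Y i a)) := by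
    rw [B_insert_pair ha, Finset.sum_comm, Finset.mul_sum]
    rw [Finset.sum_comm (γ := Ω n k) (s := Finset.univ) (t := Finset.univ)]
    refine Finset.sum_congr rfl fun Y _ => ?_
    rw [← sum_upd a (fun X => gfun a S' f X Y (fun i => X i a) *
      (starRingEnd ℂ) (gfun a S' f X Y (fun i => Y i a)))]
    refine Finset.sum_congr rfl fun X _ => ?_
    simp only [gfun_upd_left ha, upd_col]
    rw [← Finset.sum_mul]
  rw [step1, Finset.mul_sum]
  refine Finset.sum_congr rfl fun X _ => ?_
  rw [← sum_upd a (fun Y => (∑ u : Col n, gfun a S' f X Y u) *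
      (starRingEnd ℂ) (gfun a S' f X Y (fun i => Y i a)))]
  refine Finset.sum_congr rfl fun Y _ => ?_
  simp only [gfun_upd_right ha, upd_col]
  rw [map_sum, Finset.mul_sum]

lemma sum_swap4 {α β : Type*} [Fintype α] [Fintype β] (F : α → α → β → β → ℂ) :
    ∑ X : β, ∑ Y : β, ∑ u : α, ∑ v : α, F u v X Y
      = ∑ u : α, ∑ v : α, ∑ X : β, ∑ Y : β, F u v X Y :=
  calc ∑ X : β, ∑ Y : β, ∑ u : α, ∑ v : α, F u v X Y
      = ∑ X : β, ∑ u : α, ∑ Y : β, ∑ v : α, F u v X Y :=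
        Finset.sum_congr rfl fun X _ => Finset.sum_comm
    _ = ∑ u : α, ∑ X : β, ∑ Y : β, ∑ v : α, F u v X Y := Finset.sum_comm
    _ = ∑ u : α, ∑ X : β, ∑ v : α, ∑ Y : β, F u v X Y :=
        Finset.sum_congr rfl fun u _ => Finset.sum_congr rfl fun X _ => Finset.sum_comm
    _ = ∑ u : α, ∑ v : α, ∑ X : β, ∑ Y : β, F u v X Y :=
        Finset.sum_congr rfl fun u _ => Finset.sum_comm

/-- the recursion: `4^n · B (insert a S') f = ∑_{u,v} B S' (f2 a u v f)`. -/
lemma B_insert_eq (ha : a ∉ S') (f : Ω n k → ℂ) :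
    (2^n : ℂ) * ((2^n : ℂ) * B (insert a S') f) =
      ∑ u : Col n, ∑ v : Col n, B S' (f2 a u v f) := by
  rw [B_insert_expand ha]
  have h1 : ∀ u v, B S' (f2 a u v f) = ∑ X : Ω n k, ∑ Y : Ω n k,
      gfun a S' f X Y u * (starRingEnd ℂ) (gfun a S' f X Y v) := fun u v => B_f2 f u v
  simp only [h1]
  rw [← sum_swap4 (fun u v X Y => gfun a S' f X Y u * (starRingEnd ℂ) (gfun a S' f X Y v))]
  refine Finset.sum_congr rfl fun X _ => Finset.sum_congr rfl fun Y _ => ?_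
  rw [map_sum, Finset.sum_mul_sum]

/-- `B S f` is a nonnegative real for nonempty `S`. -/
lemma B_nonneg {S : Finset (Fin k)} (hS : S.Nonempty) (f : Ω n k → ℂ) :
    ∃ r : ℝ, 0 ≤ r ∧ B S f = (r : ℂ) := by
  obtain ⟨a, haS⟩ := hS
  have hins : S = insert a (S.erase a) := (Finset.insert_erase haS).symm
  have ha : a ∉ S.erase a := Finset.notMem_erase a S
  set S' := S.erase a
  have hexp := B_insert_expand (n := n) ha f
  set R : ℝ := ∑ X : Ω n k, ∑ Y : Ω n k,
    Complex.normSq (∑ u : Col n, gfun a S' f X Y u) with hR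
  have hRC : ((R : ℂ)) = (2^n : ℂ) * ((2^n : ℂ) * B (insert a S') f) := by
    rw [hexp, hR]
    push_cast
    exact Finset.sum_congr rfl fun X _ => Finset.sum_congr rfl fun Y _ =>
      (Complex.mul_conj _).symm
  have hR0 : 0 ≤ R := Finset.sum_nonneg fun X _ => Finset.sum_nonneg fun Y _ =>
    Complex.normSq_nonneg _
  refine ⟨R / (2^n * 2^n), by positivity, ?_⟩
  rw [hins]
  have h2 : ((2:ℂ)^n) ≠ 0 := pow_ne_zero _ two_ne_zero
  push_cast
  field_simp
  linear_combination -hRC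


lemma cardOmega : Fintype.card (Ω n k) = 2^(n*k) := by
  simp only [Fintype.card_fun, Fintype.card_bool, Fintype.card_fin]
  rw [← pow_mul, Nat.mul_comm]

lemma B_empty (f : Ω n k → ℂ) : B (∅ : Finset (Fin k)) f = (2^(n*k) : ℂ) * ∑ X : Ω n k, f X := by
  unfold B
  simp only [Finset.powerset_empty, Finset.prod_singleton, Finset.card_empty, sel_empty]
  have h1 : ∀ X : Ω n k, ∑ _Y : Ω n k, cc 0 (f X) = (2^(n*k) : ℂ) * f X := by
    intro X
    rw [Finset.sum_const, Finset.card_univ, cardOmega, nsmul_eq_mul]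
    simp [cc]
  rw [Finset.sum_congr rfl fun X _ => h1 X, ← Finset.mul_sum]

lemma sum_swap3 {α β : Type*} [Fintype α] [Fintype β] (F : α → α → β → ℂ) :
    ∑ X : β, ∑ u : α, ∑ v : α, F u v X = ∑ u : α, ∑ v : α, ∑ X : β, F u v X :=
  calc ∑ X : β, ∑ u : α, ∑ v : α, F u v X
      = ∑ u : α, ∑ X : β, ∑ v : α, F u v X := Finset.sum_comm
    _ = ∑ u : α, ∑ v : α, ∑ X : β, F u v X :=
        Finset.sum_congr rfl fun u _ => Finset.sum_comm

/-- The main inductive correlation inequality. -/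
lemma main_ineq (S : Finset (Fin k)) :
    ∀ (f : Ω n k → ℂ) (φ : Fin k → Ω n k → ℝ),
    (∀ j ∈ S, ∀ X, |φ j X| ≤ 1) →
    (∀ j ∈ S, ∀ X Y : Ω n k, (∀ i, ∀ j', j' ≠ j → X i j' = Y i j') → φ j X = φ j Y) →
    ((2:ℝ)^(n*k))^2 * ‖∑ X : Ω n k, f X * ∏ j ∈ S, ((φ j X : ℝ) : ℂ)‖^(2^S.card)
      ≤ ((2:ℝ)^(n*k))^(2^S.card) * ‖B S f‖ := by
  induction S using Finset.induction_on with
  | empty =>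
      intro f φ hb hi
      simp only [Finset.prod_empty, mul_one, Finset.card_empty, pow_zero, pow_one]
      rw [B_empty, norm_mul]
      have h2 : ‖((2:ℂ)^(n*k))‖ = (2:ℝ)^(n*k) := by
        rw [norm_pow]; norm_num
      rw [h2]; ring_nf
      exact le_of_eq (by ring)
  | @insert a S' ha ih =>
      intro f φ hb hi
      obtain ⟨t, ht⟩ : ∃ t, 2^S'.card = t + 1 :=
        ⟨2^S'.card - 1, (Nat.succ_pred_eq_of_pos (pow_pos two_pos _)).symm⟩
      set N : ℝ := (2:ℝ)^(n*k) with hN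
      set M : ℝ := (2:ℝ)^n with hM
      have hN0 : (0:ℝ) < N := by positivity
      have hM0 : (0:ℝ) < M := by positivity
      set m : ℕ := 2^S'.card with hm
      have hm1 : 1 ≤ m := Nat.one_le_two_pow
      set Γ : ℂ := ∑ X : Ω n k, f X * ∏ j ∈ insert a S', ((φ j X : ℝ):ℂ) with hΓ
      set inr : Ω n k → ℂ := fun X =>
        ∑ u : Col n, (f (upd X a u) * ∏ j ∈ S', ((φ j (upd X a u) : ℝ):ℂ)) with hinr
      -- Step 1 : resample column a
      have step1 : ((2:ℂ)^n) * Γ = ∑ X : Ω n k, ((φ a X : ℝ):ℂ) * inr X := by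
        rw [hΓ, ← sum_upd a (fun X => f X * ∏ j ∈ insert a S', ((φ j X : ℝ):ℂ))]
        refine Finset.sum_congr rfl fun X _ => ?_
        simp only [hinr]
        rw [Finset.mul_sum]
        refine Finset.sum_congr rfl fun u _ => ?_
        rw [Finset.prod_insert ha]
        have hφa : φ a (upd X a u) = φ a X := by
          refine hi a (Finset.mem_insert_self a S') _ _ fun i j' hj' => ?_
          simp [upd, hj']
        rw [hφa]; ring
      -- Step 2 : drop φ a, triangle inequality
      have step2 : M * ‖Γ‖ ≤ ∑ X : Ω n k, ‖inr X‖ := by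
        have hnn : ‖((2:ℂ)^n) * Γ‖ = M * ‖Γ‖ := by
          rw [norm_mul, norm_pow, hM, Complex.norm_ofNat]
        calc M * ‖Γ‖ = ‖∑ X : Ω n k, ((φ a X : ℝ):ℂ) * inr X‖ := by rw [← step1, hnn]
          _ ≤ ∑ X : Ω n k, ‖((φ a X : ℝ):ℂ) * inr X‖ := norm_sum_le _ _
          _ ≤ ∑ X : Ω n k, ‖inr X‖ := by
              refine Finset.sum_le_sum fun X _ => ?_
              rw [norm_mul]
              refine mul_le_of_le_one_left (norm_nonneg _) ?_
              rw [Complex.norm_real, Real.norm_eq_abs]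
              exact hb a (Finset.mem_insert_self a S') X
      -- Step 3 : Cauchy-Schwarz
      set Sig2 : ℝ := ∑ X : Ω n k, ‖inr X‖^2 with hSig2def
      have hSig20 : 0 ≤ Sig2 := Finset.sum_nonneg fun X _ => sq_nonneg _
      have step3 : (∑ X : Ω n k, ‖inr X‖)^2 ≤ N * Sig2 := by
        have h := sq_sum_le_card_mul_sum_sq (s := Finset.univ)
          (f := fun X : Ω n k => ‖inr X‖)
        rw [Finset.card_univ, cardOmega] at h
        rw [hSig2def, hN]
        calc (∑ X : Ω n k, ‖inr X‖)^2 ≤ ((2^(n*k) : ℕ) : ℝ) * ∑ X : Ω n k, ‖inr X‖^2 := h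
          _ = (2:ℝ)^(n*k) * ∑ X : Ω n k, ‖inr X‖^2 := by push_cast; ring
      -- Step 4 : expand the square
      set A : Col n × Col n → ℂ := fun p =>
        ∑ X : Ω n k, f2 a p.1 p.2 f X *
          ∏ j ∈ S', (((φ j (upd X a p.1) * φ j (upd X a p.2) : ℝ)):ℂ) with hA
      have step4 : ((Sig2 : ℝ) : ℂ) = ∑ p : Col n × Col n, A p := by
        have hX : ∀ X : Ω n k, ((‖inr X‖^2 : ℝ) : ℂ) = ∑ u : Col n, ∑ v : Col n,
            f2 a u v f X * ∏ j ∈ S', (((φ j (upd X a u) * φ j (upd X a v) : ℝ)):ℂ) := by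
          intro X
          have h1 : ((‖inr X‖^2 : ℝ) : ℂ) = inr X * (starRingEnd ℂ) (inr X) := by
            rw [Complex.mul_conj]
            norm_cast
            exact Complex.sq_norm _
          rw [h1]
          simp only [hinr]
          rw [map_sum, Finset.sum_mul_sum]
          refine Finset.sum_congr rfl fun u _ => Finset.sum_congr rfl fun v _ => ?_
          rw [map_mul, map_prod]
          simp only [Complex.conj_ofReal]
          rw [f2]
          push_cast
          rw [Finset.prod_mul_distrib]
          ring
        rw [hSig2def, Complex.ofReal_sum]
        rw [Finset.sum_congr rfl fun X _ => hX X]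
        rw [sum_swap3 (fun u v X => f2 a u v f X *
          ∏ j ∈ S', (((φ j (upd X a u) * φ j (upd X a v) : ℝ)):ℂ))]
        rw [Fintype.sum_prod_type]
      -- Step 5 : induction hypothesis applied to each pair
      have step5 : ∀ p : Col n × Col n,
          N^2 * ‖A p‖^m ≤ N^m * ‖B S' (f2 a p.1 p.2 f)‖ := by
        intro p
        have hb' : ∀ j ∈ S', ∀ X, |φ j (upd X a p.1) * φ j (upd X a p.2)| ≤ 1 := by
          intro j hj X
          rw [abs_mul]
          exact mul_le_one₀ (hb j (Finset.mem_insert_of_mem hj) _) (abs_nonneg _)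
            (hb j (Finset.mem_insert_of_mem hj) _)
        have hi' : ∀ j ∈ S', ∀ X Y : Ω n k,
            (∀ i, ∀ j', j' ≠ j → X i j' = Y i j') →
            φ j (upd X a p.1) * φ j (upd X a p.2) = φ j (upd Y a p.1) * φ j (upd Y a p.2) := by
          intro j hj X Y hXY
          have key : ∀ w : Col n, φ j (upd X a w) = φ j (upd Y a w) := by
            intro w
            refine hi j (Finset.mem_insert_of_mem hj) _ _ fun i j' hj' => ?_
            by_cases hja : j' = a
            · simp [upd, hja]
            · simp [upd, hja, hXY i j' hj']
          rw [key p.1, key p.2]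
        exact ih (f2 a p.1 p.2 f) (fun j X => φ j (upd X a p.1) * φ j (upd X a p.2)) hb' hi'
      -- norm of B S f
      obtain ⟨rS, hrS0, hrSB⟩ := B_nonneg (Finset.insert_nonempty a S') f
      have hBnorm : ‖B (insert a S') f‖ = rS := by
        rw [hrSB, Complex.norm_real, Real.norm_eq_abs, _root_.abs_of_nonneg hrS0]
      -- reduce goal exponents
      rw [Finset.card_insert_of_notMem ha]
      have hexp : 2^(S'.card + 1) = 2 * m := by rw [hm, pow_succ]; ring
      rw [hexp, pow_mul]
      rcases Finset.eq_empty_or_nonempty S' with hS'e | hS'ne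
      · -- base-like case S' = ∅, m = 1
        have hm' : m = 1 := by rw [hm, hS'e]; simp
        -- key identity : M^2 * ‖B S f‖ = N * Sig2
        have hkey : M^2 * rS = N * Sig2 := by
          have hBe := B_insert_eq (n := n) ha f
          have hA' : ∀ u v : Col n, B S' (f2 a u v f)
              = (2^(n*k) : ℂ) * A (u, v) := by
            intro u v
            rw [hS'e, B_empty, hA]
            simp [hS'e]
          rw [hrSB] at hBe
          have : ((M^2 * rS : ℝ) : ℂ) = ((N * Sig2 : ℝ) : ℂ) := by
            push_cast
            rw [hM, hN]
            push_cast
            calc ((2:ℂ)^n)^2 * (rS:ℂ)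
                = (2:ℂ)^n * ((2:ℂ)^n * (rS:ℂ)) := by ring
              _ = ∑ u : Col n, ∑ v : Col n, B S' (f2 a u v f) := hBe
              _ = ∑ u : Col n, ∑ v : Col n, (2^(n*k) : ℂ) * A (u, v) := by
                  exact Finset.sum_congr rfl fun u _ => Finset.sum_congr rfl fun v _ => hA' u v
              _ = (2^(n*k) : ℂ) * ∑ p : Col n × Col n, A p := by
                  rw [Fintype.sum_prod_type, Finset.mul_sum]
                  exact Finset.sum_congr rfl fun u _ => (Finset.mul_sum _ _ _).symm
              _ = (2:ℂ)^(n*k) * ((Sig2 : ℝ) : ℂ) := by rw [← step4]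
          exact_mod_cast this
        rw [hm']
        norm_num
        have hfin : M^2 * (‖Γ‖^2) ≤ M^2 * ‖B (insert a S') f‖ := by
          calc M^2 * ‖Γ‖^2 = (M * ‖Γ‖)^2 := by ring
            _ ≤ (∑ X : Ω n k, ‖inr X‖)^2 := by
                apply pow_le_pow_left₀ (by positivity) step2
            _ ≤ N * Sig2 := step3
            _ = M^2 * rS := hkey.symm
            _ = M^2 * ‖B (insert a S') f‖ := by rw [hBnorm]
        have hred := le_of_mul_le_mul_left hfin (by positivity : (0:ℝ) < M^2)
        exact mul_le_mul_of_nonneg_left hred (by positivity)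
      · -- main case : S' nonempty
        choose r hr0 hrB using fun p : Col n × Col n => B_nonneg hS'ne (f2 a p.1 p.2 f)
        have hAr : ∀ p : Col n × Col n, ‖B S' (f2 a p.1 p.2 f)‖ = r p := by
          intro p
          rw [hrB p, Complex.norm_real, Real.norm_eq_abs, _root_.abs_of_nonneg (hr0 p)]
        have hsum : ∑ p : Col n × Col n, r p = M^2 * rS := by
          have hBe := B_insert_eq (n := n) ha f
          rw [hrSB] at hBe
          have : ((∑ p : Col n × Col n, r p : ℝ) : ℂ) = ((M^2 * rS : ℝ) : ℂ) := by
            push_cast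
            rw [hM]
            push_cast
            rw [Fintype.sum_prod_type]
            calc ∑ u : Col n, ∑ v : Col n, ((r (u, v) : ℝ) : ℂ)
                = ∑ u : Col n, ∑ v : Col n, B S' (f2 a u v f) := by
                  exact Finset.sum_congr rfl fun u _ => Finset.sum_congr rfl fun v _ =>
                    (hrB (u, v)).symm
              _ = (2:ℂ)^n * ((2:ℂ)^n * (rS:ℂ)) := hBe.symm
              _ = ((2:ℂ)^n)^2 * (rS:ℂ) := by ring
          exact_mod_cast this
        -- chain of inequalities
        have j1 : Sig2 ≤ ∑ p : Col n × Col n, ‖A p‖ := by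
          have : Sig2 = ‖((Sig2:ℝ):ℂ)‖ := by
            rw [Complex.norm_real, Real.norm_eq_abs, _root_.abs_of_nonneg hSig20]
          rw [this, step4]
          exact norm_sum_le _ _
        have j2 : (∑ p : Col n × Col n, ‖A p‖)^m ≤ (M^2)^t * ∑ p : Col n × Col n, ‖A p‖^m := by
          have h := pow_sum_le_card_mul_sum_pow (s := (Finset.univ : Finset (Col n × Col n)))
            (f := fun p => ‖A p‖) (fun p _ => norm_nonneg _) t
          rw [← ht] at h
          have hcard : ((Finset.univ : Finset (Col n × Col n)).card : ℝ) = M^2 := by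
            rw [Finset.card_univ, Fintype.card_prod]
            simp [hM, Fintype.card_fun]
            ring
          rw [hcard] at h
          exact h
        have j3 : N^2 * (∑ p : Col n × Col n, ‖A p‖^m) ≤ N^m * (M^2 * ‖B (insert a S') f‖) := by
          calc N^2 * (∑ p : Col n × Col n, ‖A p‖^m)
              = ∑ p : Col n × Col n, N^2 * ‖A p‖^m := Finset.mul_sum _ _ _
            _ ≤ ∑ p : Col n × Col n, N^m * ‖B S' (f2 a p.1 p.2 f)‖ :=
                Finset.sum_le_sum fun p _ => step5 p
            _ = N^m * ∑ p : Col n × Col n, r p := by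
                rw [Finset.mul_sum]
                exact Finset.sum_congr rfl fun p _ => by rw [hAr p]
            _ = N^m * (M^2 * rS) := by rw [hsum]
            _ = N^m * (M^2 * ‖B (insert a S') f‖) := by rw [hBnorm]
        -- assemble
        have big : M^(2*m) * (N^2 * (‖Γ‖^2)^m) ≤ M^(2*m) * (N^(2*m) * ‖B (insert a S') f‖) := by
          have e1 : M^(2*m) * (N^2 * (‖Γ‖^2)^m) = N^2 * ((M*‖Γ‖)^2)^m := by
            rw [mul_pow, mul_pow, ← pow_mul M 2 m]
            ring
          rw [e1]
          calc N^2 * ((M*‖Γ‖)^2)^m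
              ≤ N^2 * (N*Sig2)^m := by
                refine mul_le_mul_of_nonneg_left ?_ (by positivity)
                refine pow_le_pow_left₀ (by positivity) ?_ m
                exact le_trans (pow_le_pow_left₀ (by positivity) step2 2) step3
            _ = N^m * (N^2 * Sig2^m) := by rw [mul_pow]; ring
            _ ≤ N^m * (N^2 * (∑ p : Col n × Col n, ‖A p‖)^m) := by
                refine mul_le_mul_of_nonneg_left (mul_le_mul_of_nonneg_left ?_ (by positivity))
                  (by positivity)
                exact pow_le_pow_left₀ hSig20 j1 m
            _ ≤ N^m * (N^2 * ((M^2)^t * ∑ p : Col n × Col n, ‖A p‖^m)) := by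
                refine mul_le_mul_of_nonneg_left (mul_le_mul_of_nonneg_left j2 (by positivity))
                  (by positivity)
            _ = N^m * (M^2)^t * (N^2 * ∑ p : Col n × Col n, ‖A p‖^m) := by ring
            _ ≤ N^m * (M^2)^t * (N^m * (M^2 * ‖B (insert a S') f‖)) := by
                refine mul_le_mul_of_nonneg_left j3 (by positivity)
            _ = M^(2*m) * (N^(2*m) * ‖B (insert a S') f‖) := by
                have hMm : (M^2)^t * M^2 = M^(2*m) := by
                  rw [← pow_succ, ← ht, ← pow_mul, Nat.mul_comm]
                have hNm : N^m * N^m = N^(2*m) := by rw [← pow_add, two_mul]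
                calc N^m * (M^2)^t * (N^m * (M^2 * ‖B (insert a S') f‖))
                    = ((M^2)^t * M^2) * ((N^m * N^m) * ‖B (insert a S') f‖) := by ring
                  _ = M^(2*m) * (N^(2*m) * ‖B (insert a S') f‖) := by
                      rw [hMm, hNm]
        exact le_of_mul_le_mul_left big (by positivity)


/-! ## The cube root of unity -/

noncomputable def om : ℂ := Complex.exp ((2 * Real.pi / 3 : ℝ) * Complex.I)

lemma om_ne_zero : om ≠ 0 := Complex.exp_ne_zero _

lemma om_cube : om^3 = 1 := by
  rw [om, ← Complex.exp_nat_mul]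
  have harg : ((3:ℕ):ℂ) * ((2 * Real.pi / 3 : ℝ) * Complex.I) = 2 * (Real.pi:ℂ) * Complex.I := by
    push_cast; ring
  rw [harg, Complex.exp_two_pi_mul_I]

lemma om_ne_one : om ≠ 1 := by
  rw [om]
  intro h
  rw [Complex.exp_eq_one_iff] at h
  obtain ⟨q, hq⟩ := h
  have him := congrArg Complex.im hq
  simp [Complex.mul_im] at him
  have hpi := Real.pi_pos
  have hq3 : (3:ℝ) * (q:ℝ) = 1 := by
    have h2pi : (2:ℝ) * Real.pi ≠ 0 := by positivity
    field_simp at him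
    nlinarith [him]
  have : (3:ℤ) * q = 1 := by exact_mod_cast hq3
  omega

lemma norm_om : ‖om‖ = 1 := by
  rw [om, Complex.norm_exp]
  simp

lemma conj_om : (starRingEnd ℂ) om = om^2 := by
  have h1 : om * (starRingEnd ℂ) om = 1 := by
    rw [Complex.mul_conj]
    norm_cast
    rw [← Complex.sq_norm, norm_om]
    norm_num
  have h2 : om * om^2 = 1 := by
    rw [← pow_succ']
    exact om_cube
  have := h1.trans h2.symm
  exact mul_left_cancel₀ om_ne_zero this

lemma om_sum : 1 + om + om^2 = 0 := by
  have h : (om - 1) * (1 + om + om^2) = 0 := by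
    have : (om - 1) * (1 + om + om^2) = om^3 - 1 := by ring
    rw [this, om_cube, sub_self]
  rcases mul_eq_zero.mp h with h' | h'
  · exact absurd (sub_eq_zero.mp h') om_ne_one
  · exact h'

lemma om_pow_mod (m : ℕ) : om^m = om^(m % 3) := by
  conv_lhs => rw [← Nat.div_add_mod m 3]
  rw [pow_add, pow_mul, om_cube, one_pow, one_mul]

lemma om_add_conj {m : ℕ} (h : m % 3 = 1 ∨ m % 3 = 2) :
    om^m + (starRingEnd ℂ) (om^m) = -1 := by
  rw [map_pow, conj_om, ← pow_mul, om_pow_mod m, om_pow_mod (2*m)]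
  have h2 : (2*m) % 3 = (2 * (m % 3)) % 3 := by
    conv_lhs => rw [Nat.mul_mod]
  rcases h with h | h <;> rw [h] <;> rw [h2, h] <;> norm_num <;>
    linear_combination om_sum

/-! ## Counting lemmas -/

lemma rowXor_lt_two (u : Fin k → Bool) : rowXor u < 2 := Nat.mod_lt _ (by norm_num)

lemma neg_one_pow_mod_two (c : ℕ) : ((-1:ℤ))^(c % 2) = (-1:ℤ)^c := by
  rcases Nat.even_or_odd c with h | h
  · rw [Nat.even_iff.mp h, pow_zero, h.neg_one_pow]
  · rw [Nat.odd_iff.mp h, pow_one, h.neg_one_pow]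

lemma powerset_parity_count (hk : 0 < k) :
    (((Finset.univ : Finset (Fin k)).powerset.filter (fun T => T.card % 2 = 0)).card = 2^(k-1)) ∧
    (((Finset.univ : Finset (Fin k)).powerset.filter (fun T => ¬ T.card % 2 = 0)).card = 2^(k-1)) := by
  have htot : ((Finset.univ : Finset (Fin k)).powerset.filter (fun T => T.card % 2 = 0)).card
      + ((Finset.univ : Finset (Fin k)).powerset.filter (fun T => ¬ T.card % 2 = 0)).card
      = 2^k := by
    rw [Finset.card_filter_add_card_filter_not, Finset.card_powerset,
      Finset.card_univ, Fintype.card_fin]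
  have hne : (Finset.univ : Finset (Fin k)).Nonempty := ⟨⟨0, hk⟩, Finset.mem_univ _⟩
  have hsum := Finset.sum_powerset_neg_one_pow_card_of_nonempty hne
  rw [← Finset.sum_filter_add_sum_filter_not ((Finset.univ : Finset (Fin k)).powerset)
    (fun T => T.card % 2 = 0)] at hsum
  have he : ∑ T ∈ (Finset.univ : Finset (Fin k)).powerset.filter (fun T => T.card % 2 = 0),
      ((-1:ℤ))^T.card
      = ((Finset.univ : Finset (Fin k)).powerset.filter (fun T => T.card % 2 = 0)).card := by
    rw [Finset.sum_congr rfl fun T hT => ?_]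
    · rw [Finset.sum_const, nsmul_eq_mul, mul_one]
    · exact (Nat.even_iff.mpr (Finset.mem_filter.mp hT).2).neg_one_pow
  have ho : ∑ T ∈ (Finset.univ : Finset (Fin k)).powerset.filter (fun T => ¬ T.card % 2 = 0),
      ((-1:ℤ))^T.card
      = -(((Finset.univ : Finset (Fin k)).powerset.filter (fun T => ¬ T.card % 2 = 0)).card) := by
    rw [Finset.sum_congr rfl fun T hT => ?_]
    · rw [Finset.sum_const, nsmul_eq_mul, mul_neg_one]
    · have := (Finset.mem_filter.mp hT).2
      exact (Nat.odd_iff.mpr (by omega)).neg_one_pow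
  rw [he, ho] at hsum
  have hpk : 2^k = 2 * 2^(k-1) := by
    rw [← pow_succ']
    congr 1
    omega
  omega

lemma vector_parity_count (hk : 0 < k) :
    ((Finset.univ : Finset (Fin k → Bool)).filter (fun x => rowXor x = 1)).card = 2^(k-1) ∧
    ((Finset.univ : Finset (Fin k → Bool)).filter (fun x => ¬ rowXor x = 1)).card = 2^(k-1) := by
  have htot : ((Finset.univ : Finset (Fin k → Bool)).filter (fun x => rowXor x = 1)).card
      + ((Finset.univ : Finset (Fin k → Bool)).filter (fun x => ¬ rowXor x = 1)).card = 2^k := by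
    rw [Finset.card_filter_add_card_filter_not, Finset.card_univ,
      Fintype.card_fun]
    simp
  have hzero : ∑ x : Fin k → Bool, ((-1:ℤ))^(rowXor x) = 0 := by
    have hx : ∀ x : Fin k → Bool, ((-1:ℤ))^(rowXor x)
        = ∏ j : Fin k, (if x j = true then (-1:ℤ) else 1) := by
      intro x
      have hc : ((-1:ℤ))^((Finset.univ.filter (fun j => x j = true)).card)
          = ∏ _j ∈ Finset.univ.filter (fun j => x j = true), (-1:ℤ) :=
        (Finset.prod_const _).symm
      rw [rowXor, neg_one_pow_mod_two, hc, Finset.prod_filter]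
    rw [Finset.sum_congr rfl fun x _ => hx x]
    have := Finset.sum_prod_piFinset (Finset.univ : Finset Bool)
      (fun (_ : Fin k) (b : Bool) => if b = true then (-1:ℤ) else 1)
    rw [Fintype.piFinset_univ] at this
    rw [this]
    have : ∑ b : Bool, (if b = true then (-1:ℤ) else 1) = 0 := by decide
    rw [Finset.prod_congr rfl fun j _ => this, Finset.prod_const, Finset.card_univ,
      Fintype.card_fin]
    exact zero_pow hk.ne'
  rw [← Finset.sum_filter_add_sum_filter_not (Finset.univ : Finset (Fin k → Bool))
    (fun x => rowXor x = 1)] at hzero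
  have he : ∑ x ∈ (Finset.univ : Finset (Fin k → Bool)).filter (fun x => rowXor x = 1),
      ((-1:ℤ))^(rowXor x)
      = -(((Finset.univ : Finset (Fin k → Bool)).filter (fun x => rowXor x = 1)).card) := by
    rw [Finset.sum_congr rfl fun x hx => ?_]
    · rw [Finset.sum_const, nsmul_eq_mul, mul_neg_one]
    · rw [(Finset.mem_filter.mp hx).2, pow_one]
  have ho : ∑ x ∈ (Finset.univ : Finset (Fin k → Bool)).filter (fun x => ¬ rowXor x = 1),
      ((-1:ℤ))^(rowXor x)
      = (((Finset.univ : Finset (Fin k → Bool)).filter (fun x => ¬ rowXor x = 1)).card) := by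
    rw [Finset.sum_congr rfl fun x hx => ?_]
    · rw [Finset.sum_const, nsmul_eq_mul, mul_one]
    · have h2 := (Finset.mem_filter.mp hx).2
      have h3 := rowXor_lt_two x
      have : rowXor x = 0 := by omega
      rw [this, pow_zero]
  rw [he, ho] at hzero
  have hpk : 2^k = 2 * 2^(k-1) := by
    rw [← pow_succ']
    congr 1
    omega
  omega

/-! ## Parity of mixed rows -/

lemma cast_rowXor (u : Fin k → Bool) :
    ((rowXor u : ℕ) : ZMod 2) = ∑ j : Fin k, (if u j = true then (1 : ZMod 2) else 0) := by
  rw [rowXor, ZMod.natCast_mod]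
  rw [Finset.card_eq_sum_ones]
  push_cast
  rw [← Finset.sum_filter]

lemma rowXor_flip_mix (x : Fin k → Bool) (T : Finset (Fin k)) :
    rowXor (fun j => if j ∈ T then !(x j) else x j) = (rowXor x + T.card) % 2 := by
  have h1 : ((rowXor (fun j => if j ∈ T then !(x j) else x j) : ℕ) : ZMod 2)
      = ((rowXor x + T.card : ℕ) : ZMod 2) := by
    rw [cast_rowXor, Nat.cast_add, cast_rowXor]
    have hT : ((T.card : ℕ) : ZMod 2) = ∑ j : Fin k, (if j ∈ T then (1 : ZMod 2) else 0) := by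
      rw [Finset.card_eq_sum_ones]
      push_cast
      rw [Finset.sum_ite_mem, Finset.univ_inter]
    rw [hT, ← Finset.sum_add_distrib]
    refine Finset.sum_congr rfl fun j _ => ?_
    by_cases hj : j ∈ T <;> by_cases hx : x j = true <;> simp [hj, hx] <;> decide
  rw [ZMod.natCast_eq_natCast_iff] at h1
  have h2 := h1.symm
  unfold Nat.ModEq at h2
  have h3 := rowXor_lt_two (fun j => if j ∈ T then !(x j) else x j)
  omega

/-! ## The row factor -/

lemma norm_om_pow (e : ℕ) : ‖om ^ e‖ = 1 := by rw [norm_pow, norm_om, one_pow]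

noncomputable def rho (x y : Fin k → Bool) : ℂ :=
  ∏ T ∈ (Finset.univ : Finset (Fin k)).powerset,
    cc T.card (om ^ rowXor (fun j => if j ∈ T then y j else x j))

lemma rho_eq_one {x y : Fin k → Bool} (j₀ : Fin k) (h : x j₀ = y j₀) : rho x y = 1 := by
  unfold rho
  have huniv : (Finset.univ : Finset (Fin k)) = insert j₀ (Finset.univ.erase j₀) :=
    (Finset.insert_erase (Finset.mem_univ j₀)).symm
  rw [huniv, Finset.prod_powerset_insert (Finset.notMem_erase j₀ _),
    ← Finset.prod_mul_distrib]
  rw [Finset.prod_congr rfl fun T hT => ?_]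
  · exact Finset.prod_const_one
  · have haT : j₀ ∉ T := fun hmem =>
      (Finset.notMem_erase j₀ _) (Finset.mem_powerset.mp hT hmem)
    have hmix : (fun j => if j ∈ insert j₀ T then y j else x j)
        = (fun j => if j ∈ T then y j else x j) := by
      funext j
      by_cases hj : j = j₀
      · subst hj; simp [haT, h]
      · simp [Finset.mem_insert, hj]
    rw [Finset.card_insert_of_notMem haT, hmix, cc_succ, Complex.mul_conj,
      Complex.normSq_eq_norm_sq, norm_cc, norm_om_pow]
    norm_num

lemma rho_flip (hk : 0 < k) (x : Fin k → Bool) :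
    rho x (fun j => !(x j)) =
      if rowXor x = 1 then om^(2^(k-1)) else (starRingEnd ℂ) (om^(2^(k-1))) := by
  unfold rho
  rw [Finset.prod_congr rfl fun T _ => by rw [rowXor_flip_mix]]
  rw [← Finset.prod_filter_mul_prod_filter_not ((Finset.univ : Finset (Fin k)).powerset)
    (fun T => T.card % 2 = 0)]
  obtain ⟨hce, hco⟩ := powerset_parity_count hk
  rcases (show rowXor x = 0 ∨ rowXor x = 1 from by have := rowXor_lt_two x; omega)
    with h0 | h1
  · rw [if_neg (by omega)]
    have he : ∀ T ∈ ((Finset.univ : Finset (Fin k)).powerset.filter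
        (fun T => T.card % 2 = 0)),
        cc T.card (om ^ ((rowXor x + T.card) % 2)) = 1 := by
      intro T hT
      have h2 := (Finset.mem_filter.mp hT).2
      have h3 : (rowXor x + T.card) % 2 = 0 := by omega
      rw [h3, pow_zero]
      simp [cc, h2]
    have ho : ∀ T ∈ ((Finset.univ : Finset (Fin k)).powerset.filter
        (fun T => ¬ T.card % 2 = 0)),
        cc T.card (om ^ ((rowXor x + T.card) % 2)) = (starRingEnd ℂ) om := by
      intro T hT
      have h2 := (Finset.mem_filter.mp hT).2
      have h3 : (rowXor x + T.card) % 2 = 1 := by omega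
      rw [h3, pow_one]
      simp [cc, h2]
    rw [Finset.prod_congr rfl he, Finset.prod_congr rfl ho, Finset.prod_const_one,
      Finset.prod_const, hco, one_mul, ← map_pow]
  · rw [if_pos h1]
    have he : ∀ T ∈ ((Finset.univ : Finset (Fin k)).powerset.filter
        (fun T => T.card % 2 = 0)),
        cc T.card (om ^ ((rowXor x + T.card) % 2)) = om := by
      intro T hT
      have h2 := (Finset.mem_filter.mp hT).2
      have h3 : (rowXor x + T.card) % 2 = 1 := by omega
      rw [h3, pow_one]
      simp [cc, h2]
    have ho : ∀ T ∈ ((Finset.univ : Finset (Fin k)).powerset.filter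
        (fun T => ¬ T.card % 2 = 0)),
        cc T.card (om ^ ((rowXor x + T.card) % 2)) = 1 := by
      intro T hT
      have h2 := (Finset.mem_filter.mp hT).2
      have h3 : (rowXor x + T.card) % 2 = 0 := by omega
      rw [h3, pow_zero]
      simp [cc, h2]
    rw [Finset.prod_congr rfl he, Finset.prod_congr rfl ho, Finset.prod_const_one,
      Finset.prod_const, hce, mul_one]

lemma sum_rho (hk : 0 < k) (x : Fin k → Bool) :
    ∑ y : Fin k → Bool, rho x y = ((2^k - 1 : ℕ) : ℂ) + rho x (fun j => !(x j)) := by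
  rw [← Finset.sum_erase_add Finset.univ _ (Finset.mem_univ (fun j => !(x j)))]
  congr 1
  have hone : ∀ y ∈ Finset.univ.erase (fun j => !(x j)), rho x y = 1 := by
    intro y hy
    have hyne := (Finset.mem_erase.mp hy).1
    have : ∃ j, x j = y j := by
      by_contra hcon
      push_neg at hcon
      apply hyne
      funext j
      have := hcon j
      revert this
      cases hxj : x j <;> cases hyj : y j <;> simp
    obtain ⟨j₀, hj₀⟩ := this
    exact rho_eq_one j₀ hj₀
  rw [Finset.sum_congr rfl hone, Finset.sum_const, Finset.card_erase_of_mem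
    (Finset.mem_univ _), Finset.card_univ]
  simp [Fintype.card_fun]

lemma total_rho (hk : 0 < k) :
    ∑ x : Fin k → Bool, ∑ y : Fin k → Bool, rho x y
      = (((4:ℝ)^k - 2^k - 2^(k-1) : ℝ) : ℂ) := by
  rw [Finset.sum_congr rfl fun x _ => sum_rho hk x, Finset.sum_add_distrib]
  rw [Finset.sum_const, Finset.card_univ]
  rw [Finset.sum_congr rfl fun x _ => rho_flip hk x]
  rw [Finset.sum_ite, Finset.sum_const, Finset.sum_const]
  obtain ⟨h1, h0⟩ := vector_parity_count hk
  rw [h1, h0]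
  have hM : 2^(k-1) % 3 = 1 ∨ 2^(k-1) % 3 = 2 := by
    have hnd : ¬ (3 ∣ 2^(k-1)) := by
      intro hdvd
      have := Nat.Prime.dvd_of_dvd_pow (p := 3) (by norm_num) hdvd
      norm_num at this
    omega
  have hconj := om_add_conj hM
  have hcard : Fintype.card (Fin k → Bool) = 2^k := by simp [Fintype.card_fun]
  rw [hcard]
  have h2k : (2:ℂ)^k = 2 * 2^(k-1) := by
    rw [← pow_succ']
    congr 1
    omega
  have h4k : ((4:ℂ))^k = (2:ℂ)^k * 2^k := by
    rw [show (4:ℂ) = 2 * 2 from by norm_num, mul_pow]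
  rw [nsmul_eq_mul, nsmul_eq_mul, nsmul_eq_mul]
  have hsub : ((2^k - 1 : ℕ) : ℂ) = (2:ℂ)^k - 1 := by
    have h1le : (1:ℕ) ≤ 2^k := Nat.one_le_two_pow
    push_cast [h1le]
    ring
  rw [hsub]
  push_cast
  have h4k2 : (2:ℂ)^(k*2) = 4^k := by
    rw [mul_comm, pow_mul]
    norm_num
  linear_combination ((2:ℂ)^(k-1)) * hconj + h4k2
  
/-! ## Computing B on the full set -/

lemma cc_prod {ι : Type*} (s : Finset ι) (m : ℕ) (f : ι → ℂ) :
    cc m (∏ i ∈ s, f i) = ∏ i ∈ s, cc m (f i) := by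
  unfold cc
  split
  · rfl
  · exact map_prod _ _ _

lemma f0_eq (X : Ω n k) :
    eFn (((∑ i, rowXor (X i) : ℕ) : ℂ) / 3) = ∏ i, om ^ rowXor (X i) := by
  rw [eFn]
  have harg : 2 * (Real.pi:ℂ) * Complex.I * (((∑ i, rowXor (X i) : ℕ) : ℂ) / 3)
      = ((∑ i, rowXor (X i) : ℕ) : ℂ) * (((2 * Real.pi / 3 : ℝ) : ℂ) * Complex.I) := by
    push_cast
    ring
  rw [harg, Complex.exp_nat_mul, ← Finset.prod_pow_eq_pow_sum]
  rfl

lemma B_univ_eq :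
    B (Finset.univ : Finset (Fin k))
        (fun X : Ω n k => eFn (((∑ i, rowXor (X i) : ℕ) : ℂ) / 3))
      = (∑ x : Fin k → Bool, ∑ y : Fin k → Bool, rho x y)^n := by
  unfold B
  have hpt : ∀ X Y : Ω n k,
      ∏ T ∈ (Finset.univ : Finset (Fin k)).powerset, cc T.card
        (eFn (((∑ i, rowXor (sel T X Y i) : ℕ) : ℂ) / 3))
      = ∏ i : Fin n, rho (X i) (Y i) := by
    intro X Y
    have h1 : ∀ T ∈ (Finset.univ : Finset (Fin k)).powerset,
        cc T.card (eFn (((∑ i, rowXor (sel T X Y i) : ℕ) : ℂ) / 3))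
        = ∏ i : Fin n, cc T.card (om ^ rowXor (sel T X Y i)) := by
      intro T _
      rw [f0_eq, cc_prod]
    rw [Finset.prod_congr rfl h1, Finset.prod_comm]
    refine Finset.prod_congr rfl fun i _ => ?_
    unfold rho
    exact Finset.prod_congr rfl fun T _ => rfl
  rw [Finset.sum_congr rfl fun X _ => Finset.sum_congr rfl fun Y _ => hpt X Y]
  rw [← Fintype.sum_prod_type']
  have hW : ∑ p : (Ω n k) × (Ω n k), ∏ i, rho (p.1 i) (p.2 i)
      = ∑ W : Fin n → ((Fin k → Bool) × (Fin k → Bool)),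
          ∏ i, rho ((W i).1) ((W i).2) := by
    rw [← Equiv.sum_comp (Equiv.arrowProdEquivProdArrow (Fin n) (fun _ => Fin k → Bool) (fun _ => Fin k → Bool))
      (fun p : (Ω n k) × (Ω n k) => ∏ i, rho (p.1 i) (p.2 i))]
    rfl
  rw [hW]
  have hpi := Finset.sum_prod_piFinset
    (Finset.univ : Finset ((Fin k → Bool) × (Fin k → Bool)))
    (fun (_ : Fin n) (w : (Fin k → Bool) × (Fin k → Bool)) => rho w.1 w.2)
  rw [Fintype.piFinset_univ] at hpi
  rw [hpi, Finset.prod_const, Finset.card_univ, Fintype.card_fin, Fintype.sum_prod_type]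

end Stmt13

open Stmt13 in
/-- correlation bound for full cylinder intersections. -/
theorem stmt_13 (n k : ℕ) (hn : 0 < n) (hk : 0 < k)
    (χ : (Fin n → Fin k → Bool) → ℝ)
    (hχ : IsCylinderOn n k Finset.univ χ) :
    ‖(∑ X : Fin n → Fin k → Bool,
            eFn (((∑ i, rowXor (X i) : ℕ) : ℂ) / 3) * (χ X : ℂ)) /
          2 ^ (n * k)‖ <
      Real.exp (-(n : ℝ) / 4 ^ k) := by

  classical
  obtain ⟨φ, hb01, hind, hprod⟩ := hχ
  set f0 : Ω n k → ℂ := fun X => eFn (((∑ i, rowXor (X i) : ℕ) : ℂ) / 3) with hf0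
  set c : ℝ := (4:ℝ)^k - 2^k - 2^(k-1) with hc
  have h2k2 : (2:ℝ) ≤ (2:ℝ)^k := by
    calc (2:ℝ) = 2^1 := (pow_one 2).symm
    _ ≤ 2^k := pow_le_pow_right₀ one_le_two hk
  have hk12 : (2:ℝ)^(k-1) ≤ (2:ℝ)^k := pow_le_pow_right₀ one_le_two (Nat.sub_le k 1)
  have hc0 : 0 ≤ c := by
    rw [hc]
    have h4 : (4:ℝ)^k = 2^k * 2^k := by
      rw [show (4:ℝ) = 2 * 2 from by norm_num, mul_pow]
    nlinarith
  have hk10 : (0:ℝ) < (2:ℝ)^(k-1) := by positivity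
  -- the main inequality applied
  have hb' : ∀ j ∈ (Finset.univ : Finset (Fin k)), ∀ X, |φ j X| ≤ 1 := by
    intro j hj X
    rcases hb01 j hj X with h | h <;> rw [h] <;> norm_num
  have hmain := main_ineq (n := n) (Finset.univ : Finset (Fin k)) f0 φ hb' hind
  rw [Finset.card_univ, Fintype.card_fin] at hmain
  have hBval : ‖B (Finset.univ : Finset (Fin k)) f0‖ = c^n := by
    rw [hf0, B_univ_eq, total_rho hk, ← hc]
    rw [← Complex.ofReal_pow, Complex.norm_real, Real.norm_eq_abs]
    exact _root_.abs_of_nonneg (by positivity)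
  rw [hBval] at hmain
  -- identify Γ
  have hΓeq : (∑ X : Fin n → Fin k → Bool, eFn (((∑ i, rowXor (X i) : ℕ) : ℂ) / 3) * (χ X : ℂ))
      = ∑ X : Ω n k, f0 X * ∏ j ∈ (Finset.univ : Finset (Fin k)), ((φ j X : ℝ) : ℂ) := by
    refine Finset.sum_congr rfl fun X _ => ?_
    rw [hprod X, Complex.ofReal_prod]
  rw [hΓeq]
  set Γ : ℂ := ∑ X : Ω n k, f0 X * ∏ j ∈ (Finset.univ : Finset (Fin k)), ((φ j X : ℝ) : ℂ)
    with hΓ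
  set N : ℝ := (2:ℝ)^(n*k) with hN
  have hN0 : (0:ℝ) < N := by positivity
  have habs : ‖Γ / 2^(n*k)‖ = ‖Γ‖ / N := by
    rw [norm_div, norm_pow, Complex.norm_ofNat]
  rw [habs]
  set P : ℝ := ‖Γ‖ / N with hP
  have hP0 : 0 ≤ P := by positivity
  -- P^(2^k) ≤ (c / 4^k)^n
  have hstep1 : P^(2^k) ≤ (c / 4^k)^n := by
    have hdiv : P^(2^k) = ‖Γ‖^(2^k) / N^(2^k) := by rw [hP, div_pow]
    have hN2 : N^2 = ((4:ℝ)^k)^n := by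
      rw [hN, ← pow_mul, show (4:ℝ) = 2^2 from by norm_num, ← pow_mul, ← pow_mul]
      congr 1
      ring
    rw [hdiv, div_pow, div_le_div_iff₀ (by positivity) (by positivity), ← hN2]
    calc ‖Γ‖^(2^k) * N^2 = N^2 * ‖Γ‖^(2^k) := by ring
      _ ≤ N^(2^k) * c^n := hmain
      _ = c^n * N^(2^k) := by ring
  -- (c/4^k)^n ≤ exp(-(2^k + 2^(k-1))/4^k)^n
  have hstep2 : (c / 4^k)^n ≤ Real.exp (-(2^k + 2^(k-1))/4^k)^n := by
    apply pow_le_pow_left₀ (by positivity)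
    have h1 : c / 4^k = 1 - (2^k + 2^(k-1))/4^k := by
      rw [hc]
      field_simp
      ring
    rw [h1]
    have hexp := Real.add_one_le_exp (-(2^k + 2^(k-1))/4^k)
    linarith [neg_div ((4:ℝ)^k) ((2:ℝ)^k + 2^(k-1)), hexp]
  -- strict comparison of exponentials
  have hstep3 : Real.exp (-(2^k + 2^(k-1))/4^k)^n < Real.exp (-(n:ℝ)/4^k)^(2^k) := by
    rw [← Real.exp_nat_mul, ← Real.exp_nat_mul]
    apply Real.exp_lt_exp.mpr
    have h4k0 : (0:ℝ) < 4^k := by positivity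
    have hn0 : (0:ℝ) < n := by exact_mod_cast hn
    have hcore : (n:ℝ) * (-(2^k + 2^(k-1))) < ((2^k : ℕ):ℝ) * (-(n:ℝ)) := by
      push_cast
      nlinarith [mul_pos hn0 hk10]
    calc (n:ℝ) * (-(2^k + 2^(k-1))/4^k)
        = ((n:ℝ) * (-(2^k + 2^(k-1))))/4^k := by ring
      _ < (((2^k : ℕ):ℝ) * (-(n:ℝ)))/4^k := div_lt_div_of_pos_right hcore h4k0
      _ = ((2^k : ℕ):ℝ) * (-(n:ℝ)/4^k) := by ring
  have hfinal : P^(2^k) < (Real.exp (-(n:ℝ)/4^k))^(2^k) :=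
    lt_of_le_of_lt (hstep1.trans hstep2) hstep3
  exact lt_of_pow_lt_pow_left₀ (2^k) (Real.exp_nonneg _) hfinal
end

section
/- For every integer k ≥ 1 and every u ∈ {0,1}^k, there exists a polynomial p ∈ 𝔽₃[x₁,…,x_k] of total degree at most k−1 such that for every x ∈ {0,1}^k with x ≠ u, p(x₁,…,x_k) equals the parity x₁ ⊕ x₂ ⊕ ⋯ ⊕ x_k (viewed as the element 0 or 1 of 𝔽₃). In fact, one may take p(x₁,…,x_k) = ∏_{i=1}^k (x_i + 1) − ∏_{i=1}^k (x_i + u_i − 1) − 1, where the bits of x and u are interpreted as elements of 𝔽₃. -/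
open Finset MvPolynomial

/-- The element of `𝔽₃` corresponding to a bit. -/
def bval3 (b : Bool) : ZMod 3 := if b then 1 else 0

/-- For every `k ≥ 1` and `u ∈ {0,1}^k` there is a polynomial
`p ∈ 𝔽₃[x₁,…,x_k]` of total degree at most `k−1` that agrees with the parity
`x₁ ⊕ ⋯ ⊕ x_k` on every Boolean point `x ≠ u`; one may take
`p = ∏ᵢ(xᵢ+1) − ∏ᵢ(xᵢ+uᵢ−1) − 1`. -/
theorem stmt_17 (k : ℕ) (hk : 1 ≤ k) (u : Fin k → Bool) :
    ∃ p : MvPolynomial (Fin k) (ZMod 3),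
      p = (∏ i, (MvPolynomial.X i + 1)) -
          (∏ i, (MvPolynomial.X i + MvPolynomial.C (bval3 (u i)) - 1)) - 1 ∧
      p.totalDegree ≤ k - 1 ∧
      ∀ x : Fin k → Bool, x ≠ u →
        MvPolynomial.eval (fun i => bval3 (x i)) p =
          (if (Finset.univ.filter (fun i => x i = true)).card % 2 = 1 then 1 else 0) := by
  classical
  set c : Fin k → ZMod 3 := fun i => bval3 (u i) with hc
  refine ⟨_, rfl, ?_, ?_⟩
  · -- degree bound
    have hfac : ∀ i : Fin k, (X i + C (c i) - 1 : MvPolynomial (Fin k) (ZMod 3))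
        = X i + C (c i - 1) := by
      intro i; rw [map_sub, map_one]; ring
    have key : ((∏ i, (X i + 1)) - (∏ i, (X i + C (c i) - 1))
          : MvPolynomial (Fin k) (ZMod 3))
        = ∑ t ∈ (univ : Finset (Fin k)).powerset,
            (∏ i ∈ t, X i) *
              (1 - ∏ i ∈ univ \ t, (C (c i - 1) : MvPolynomial (Fin k) (ZMod 3))) := by
      have h1 : (∏ i, (X i + 1) : MvPolynomial (Fin k) (ZMod 3))
          = ∑ t ∈ (univ : Finset (Fin k)).powerset,
              (∏ i ∈ t, X i) * ∏ i ∈ univ \ t, (1 : MvPolynomial (Fin k) (ZMod 3)) :=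
        Finset.prod_add _ _ _
      have h2 : (∏ i, (X i + C (c i) - 1) : MvPolynomial (Fin k) (ZMod 3))
          = ∑ t ∈ (univ : Finset (Fin k)).powerset,
              (∏ i ∈ t, X i) * ∏ i ∈ univ \ t, (C (c i - 1) : MvPolynomial (Fin k) (ZMod 3)) := by
        simp_rw [hfac]; exact Finset.prod_add _ _ _
      rw [h1, h2, ← Finset.sum_sub_distrib]
      refine Finset.sum_congr rfl fun t _ => ?_
      rw [Finset.prod_const_one]
      ring
    rw [key, sub_eq_add_neg]
    refine le_trans (totalDegree_add _ _) (max_le ?_ ?_)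
    · refine totalDegree_finsetSum_le fun t ht => ?_
      by_cases htu : t = univ
      · subst htu
        simp
      · refine le_trans (totalDegree_mul _ _) ?_
        have h0 : ((1 - ∏ i ∈ univ \ t, (C (c i - 1)) :
            MvPolynomial (Fin k) (ZMod 3))).totalDegree = 0 := by
          rw [← map_prod, ← map_one (C : ZMod 3 →+* MvPolynomial (Fin k) (ZMod 3)),
            ← map_sub, totalDegree_C]
        rw [h0, add_zero]
        refine le_trans (totalDegree_finset_prod _ _) ?_
        have h1 : ∑ i ∈ t, (X i : MvPolynomial (Fin k) (ZMod 3)).totalDegree ≤ t.card := by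
          simp [totalDegree_X]
        refine h1.trans ?_
        have h2 : t.card < k := by
          have := Finset.card_lt_card (lt_of_le_of_ne (Finset.mem_powerset.mp ht) htu)
          simpa using this
        omega
    · rw [show (-1 : MvPolynomial (Fin k) (ZMod 3)) = C (-1) by simp, totalDegree_C]
      exact Nat.zero_le _
  · intro x hx
    simp only [map_sub, map_one, map_prod, eval_add, eval_X, eval_C]
    have hB : (∏ i, (bval3 (x i) + c i - 1)) = 0 := by
      obtain ⟨j, hj⟩ : ∃ j, x j ≠ u j := by
        by_contra h; push_neg at h; exact hx (funext h)
      refine Finset.prod_eq_zero (mem_univ j) ?_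
      show bval3 (x j) + c j - 1 = 0
      simp only [hc]
      cases hxj : x j <;> cases huj : u j
      · exact absurd (hxj.trans huj.symm) hj
      · simp [bval3]
      · simp [bval3]
      · exact absurd (hxj.trans huj.symm) hj
    rw [hB, sub_zero]
    have hA : (∏ i, (bval3 (x i) + 1))
        = (-1 : ZMod 3) ^ (univ.filter (fun i => x i = true)).card := by
      rw [← Finset.prod_filter_mul_prod_filter_not univ (fun i => x i = true)]
      have h1 : ∏ i ∈ univ.filter (fun i => x i = true), (bval3 (x i) + 1)
          = (-1 : ZMod 3) ^ (univ.filter (fun i => x i = true)).card := by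
        rw [← Finset.prod_const]
        refine Finset.prod_congr rfl fun i hi => ?_
        simp only [mem_filter] at hi
        rw [hi.2]; decide
      have h2 : ∏ i ∈ univ.filter (fun i => ¬ x i = true), (bval3 (x i) + 1) = 1 := by
        refine Finset.prod_eq_one fun i hi => ?_
        simp only [mem_filter] at hi
        have hxi : x i = false := by simpa using hi.2
        rw [hxi]; decide
      rw [h1, h2, mul_one]
    rw [hA]
    rcases Nat.even_or_odd (univ.filter (fun i => x i = true)).card with he | ho
    · rw [he.neg_one_pow]
      rw [Nat.even_iff] at he
      simp [he]
    · rw [ho.neg_one_pow]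
      rw [Nat.odd_iff] at ho
      rw [if_pos ho]
      decide
end
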